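/- arXiv:1511.09469 — 12 statements merged into one kernel-verified Lean document; each statement's English description precedes it below -/
import Mathlib

section
/- For any permutation π of Z/(2n+1)Z and the rotation ρ(x) = x+1, the writhe satisfies w(ρ∘π) = w(π). -/
/-- The writhe of a permutation of `ZMod (2n+1)`, comparing values via their
representatives in `{0,…,2n}`:
`w(π) = ∑_{i=0}^{2n} ∑_{j=1}^{n} sign(π(i+j) − π(i))`. -/
def writheP (n : ℕ) (π : ZMod (2 * n + 1) → ZMod (2 * n + 1)) : ℤ :=
  ∑ i : ZMod (2 * n + 1), ∑ j ∈ Finset.range n,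
    if (π i).val < (π (i + ((j + 1 : ℕ) : ZMod (2 * n + 1)))).val then 1 else -1

lemma val_ne_of_ne_neg_one (n : ℕ) (a : ZMod (2*n+3)) (ha : a ≠ -1) :
    a.val < 2*n+2 := by
  have hv : (-1 : ZMod (2*n+3)).val = 2*n+2 := ZMod.val_neg_one _
  have h1 : a.val ≠ 2*n+2 := fun h =>
    ha (ZMod.val_injective _ (by rw [h, hv]))
  have := a.val_lt
  omega

lemma val_succ_aux (n : ℕ) (a : ZMod (2*n+3)) (ha : a ≠ -1) :
    (a + 1).val = a.val + 1 := by
  haveI : Fact (1 < 2*n+3) := ⟨by omega⟩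
  have h1 : (1 : ZMod (2*n+3)).val = 1 := ZMod.val_one _
  have hlt := val_ne_of_ne_neg_one n a ha
  rw [ZMod.val_add, h1, Nat.mod_eq_of_lt (by omega)]

lemma key (n : ℕ) (a b : ZMod (2*n+3)) (hab : a ≠ b) :
    (if (a+1).val < (b+1).val then (1:ℤ) else -1)
      = (if a.val < b.val then (1:ℤ) else -1)
        + (if a = -1 then 2 else 0) - (if b = -1 then 2 else 0) := by
  have hv : (-1 : ZMod (2*n+3)).val = 2*n+2 := ZMod.val_neg_one _
  have h0 : (-1 + 1 : ZMod (2*n+3)) = 0 := neg_add_cancel 1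
  by_cases ha : a = -1
  · by_cases hb : b = -1
    · exact absurd (ha.trans hb.symm) hab
    · subst ha
      rw [h0, val_succ_aux n b hb]
      have := val_ne_of_ne_neg_one n b hb
      simp only [ZMod.val_zero, hv, if_neg hb, if_pos rfl]
      split_ifs <;> omega
  · by_cases hb : b = -1
    · subst hb
      rw [h0, val_succ_aux n a ha]
      have := val_ne_of_ne_neg_one n a ha
      simp only [ZMod.val_zero, hv, if_neg ha, if_pos rfl]
      split_ifs <;> omega
    · rw [val_succ_aux n a ha, val_succ_aux n b hb]
      simp only [if_neg ha, if_neg hb]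
      split_ifs <;> omega

/-- The writhe is invariant under left rotation: `w(ρ ∘ π) = w(π)` where `ρ(x) = x+1`. -/
theorem writhe_rotation_left (n : ℕ) (π : Equiv.Perm (ZMod (2 * n + 1))) :
    writheP n (fun x => π x + 1) = writheP n π := by
  obtain _ | n := n
  · simp [writheP]
  · unfold writheP
    rw [← sub_eq_zero, ← Finset.sum_sub_distrib]
    simp_rw [← Finset.sum_sub_distrib]
    have hstep : ∀ i : ZMod (2*(n+1)+1), ∀ j ∈ Finset.range (n+1),
        ((if (π i + 1).val < (π (i + ((j+1:ℕ) : ZMod (2*(n+1)+1))) + 1).val then (1:ℤ) else -1)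
          - (if (π i).val < (π (i + ((j+1:ℕ) : ZMod (2*(n+1)+1)))).val then (1:ℤ) else -1))
        = (if π i = -1 then (2:ℤ) else 0)
          - (if π (i + ((j+1:ℕ) : ZMod (2*(n+1)+1))) = -1 then (2:ℤ) else 0) := by
      intro i j hj
      have hne : π i ≠ π (i + ((j+1:ℕ) : ZMod (2*(n+1)+1))) := by
        intro h
        have h2 := π.injective h
        have hc : ((j+1:ℕ) : ZMod (2*(n+1)+1)) = 0 := (left_eq_add).mp h2
        rw [ZMod.natCast_eq_zero_iff] at hc
        have := Nat.le_of_dvd (by omega) hc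
        simp only [Finset.mem_range] at hj
        omega
      have hk := key n (π i) (π (i + ((j+1:ℕ) : ZMod (2*(n+1)+1)))) hne
      rw [hk]; ring
    rw [Finset.sum_congr rfl (fun i _ => Finset.sum_congr rfl (hstep i))]
    simp_rw [Finset.sum_sub_distrib]
    rw [sub_eq_zero]
    rw [Finset.sum_comm]
    conv_rhs => rw [Finset.sum_comm]
    refine Finset.sum_congr rfl fun j _ => ?_
    exact (Equiv.sum_comp (Equiv.addRight ((j+1:ℕ) : ZMod (2*(n+1)+1)))
      (fun x => if π x = -1 then (2:ℤ) else 0)).symm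
end

section
/- For every permutation σ ∈ S_{2n+1}, letting τ(x) = 2x mod (2n+1), the writhe of σ∘τ equals the bi-alternating inversion number of σ: w(σ∘τ) = Σ_{0 ≤ y < x ≤ 2n} (−1)^{x+y} sign(σ(x) − σ(y)). -/
private lemma inv2_mul (n : ℕ) : ((n+1 : ℕ) : ZMod (2*n+1)) * 2 = 1 := by
  have h : ((2*n+1 : ℕ) : ZMod (2*n+1)) = 0 := ZMod.natCast_self _
  push_cast at h ⊢
  linear_combination h

private lemma recover (n : ℕ) (i : ZMod (2*n+1)) :
    (((n+1) * (2*i : ZMod (2*n+1)).val : ℕ) : ZMod (2*n+1)) = i := by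
  rw [Nat.cast_mul, ZMod.natCast_rightInverse (2*i)]
  calc ((n+1:ℕ):ZMod (2*n+1)) * (2*i) = (((n+1:ℕ):ZMod (2*n+1)) * 2) * i := by ring
    _ = i := by rw [inv2_mul, one_mul]

private lemma two_recover (n y : ℕ) :
    (2 : ZMod (2*n+1)) * (((n+1) * y : ℕ) : ZMod (2*n+1)) = (y : ZMod (2*n+1)) := by
  rw [Nat.cast_mul]
  calc (2:ZMod (2*n+1)) * (((n+1:ℕ):ZMod (2*n+1)) * (y:ℕ))
      = (((n+1:ℕ):ZMod (2*n+1)) * 2) * y := by ring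
    _ = (y : ZMod (2*n+1)) := by rw [inv2_mul, one_mul]

private lemma key_s4 (n : ℕ) (c : ZMod (2*n+1)) (e : ℕ) (h1 : 0 < e) (h2 : e < 2*n+1) :
    (c.val < (c + (e : ZMod (2*n+1))).val ∧ (c + (e:ZMod (2*n+1))).val = c.val + e) ∨
    ((c + (e:ZMod (2*n+1))).val < c.val ∧
      c.val = (c + (e:ZMod (2*n+1))).val + (2*n+1 - e)) := by
  have ha : c.val < 2*n+1 := ZMod.val_lt _
  have hb : (c + (e:ZMod (2*n+1))).val = (c.val + e) % (2*n+1) := by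
    rw [ZMod.val_add, ZMod.val_cast_of_lt h2]
  rcases lt_or_ge (c.val + e) (2*n+1) with h | h
  · left; rw [hb, Nat.mod_eq_of_lt h]; omega
  · right
    have hmod : (c.val + e) % (2*n+1) = c.val + e - (2*n+1) := by
      rw [Nat.mod_eq_sub_mod h, Nat.mod_eq_of_lt (by omega)]
    rw [hb, hmod]; omega

private lemma flip_sgn (n : ℕ) (σ : Equiv.Perm (ZMod (2*n+1))) {A B : ZMod (2*n+1)}
    (h : A ≠ B) :
    (if (σ B).val < (σ A).val then (1:ℤ) else -1)
      = -(if (σ A).val < (σ B).val then (1:ℤ) else -1) := by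
  have hne : (σ A).val ≠ (σ B).val := fun he => h (σ.injective (ZMod.val_injective _ he))
  split_ifs <;> omega


/-- The bi-alternating inversion number
`ι̂̂(σ) = ∑_{0 ≤ y < x ≤ 2n} (−1)^{x+y} sign(σ(x) − σ(y))`. -/
def biAlt (n : ℕ) (σ : ZMod (2 * n + 1) → ZMod (2 * n + 1)) : ℤ :=
  ∑ x ∈ Finset.range (2 * n + 1), ∑ y ∈ Finset.range x,
    (-1 : ℤ) ^ (x + y) *
      (if (σ ((y : ℕ) : ZMod (2 * n + 1))).val < (σ ((x : ℕ) : ZMod (2 * n + 1))).val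
        then 1 else -1)

/-- With `τ(x) = 2x mod (2n+1)`, the writhe of `σ ∘ τ` equals the bi-alternating
inversion number of `σ`. -/
theorem writhe_eq_biAlt (n : ℕ) (σ : Equiv.Perm (ZMod (2 * n + 1))) :
    writheP n (fun x => σ (2 * x)) = biAlt n σ := by
  have harg : ∀ (i : ZMod (2*n+1)) (j : ℕ),
      2 * (i + ((j+1 : ℕ) : ZMod (2*n+1))) = 2 * i + ((2*(j+1) : ℕ) : ZMod (2*n+1)) := by
    intro i j; push_cast; ring
  have L : writheP n (fun x => σ (2 * x)) = ∑ p ∈ Finset.univ ×ˢ Finset.range n,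
      (if (σ (2*p.1)).val < (σ (2*p.1 + ((2*(p.2+1):ℕ) : ZMod (2*n+1)))).val
        then (1:ℤ) else -1) := by
    rw [Finset.sum_product]
    simp only [writheP]
    exact Finset.sum_congr rfl fun i _ => Finset.sum_congr rfl fun j _ => by
      simp only [harg i j]
  have R : biAlt n σ = ∑ q ∈ (Finset.range (2*n+1)).sigma (fun x => Finset.range x),
      ((-1:ℤ)^(q.1 + q.2) *
        (if (σ ((q.2:ℕ) : ZMod (2*n+1))).val < (σ ((q.1:ℕ) : ZMod (2*n+1))).val
          then (1:ℤ) else -1)) := by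
    rw [Finset.sum_sigma]
    simp only [biAlt]
  rw [L, R]
  refine Finset.sum_bij'
    (fun p _ => ⟨max (2*p.1 : ZMod (2*n+1)).val
                    (2*p.1 + ((2*(p.2+1):ℕ) : ZMod (2*n+1))).val,
                 min (2*p.1 : ZMod (2*n+1)).val
                    (2*p.1 + ((2*(p.2+1):ℕ) : ZMod (2*n+1))).val⟩)
    (fun q _ => if (q.1 - q.2) % 2 = 0
        then ((((n+1) * q.2 : ℕ) : ZMod (2*n+1)), (q.1 - q.2)/2 - 1)
        else ((((n+1) * q.1 : ℕ) : ZMod (2*n+1)), (2*n+1 - (q.1 - q.2))/2 - 1))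
    ?_ ?_ ?_ ?_ ?_
  · rintro ⟨i, j⟩ hp
    simp only [Finset.mem_product, Finset.mem_univ, Finset.mem_range, true_and] at hp
    dsimp only
    simp only [Finset.mem_sigma, Finset.mem_range]
    have h1 : (2*i : ZMod (2*n+1)).val < 2*n+1 := ZMod.val_lt _
    have h2 : (2*i + ((2*(j+1):ℕ):ZMod (2*n+1))).val < 2*n+1 := ZMod.val_lt _
    rcases key_s4 n (2*i) (2*(j+1)) (by omega) (by omega) with ⟨h, _⟩ | ⟨h, _⟩ <;>
      constructor <;> omega
  · rintro ⟨x, y⟩ hq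
    simp only [Finset.mem_sigma, Finset.mem_range] at hq
    obtain ⟨hx, hyx⟩ := hq
    dsimp only
    split_ifs with hpar <;>
      simp only [Finset.mem_product, Finset.mem_univ, Finset.mem_range, true_and] <;> omega
  · rintro ⟨i, j⟩ hp
    simp only [Finset.mem_product, Finset.mem_univ, Finset.mem_range, true_and] at hp
    dsimp only
    rcases key_s4 n (2*i) (2*(j+1)) (by omega) (by omega) with ⟨hlt, heq⟩ | ⟨hlt, heq⟩
    · rw [max_eq_right hlt.le, min_eq_left hlt.le, if_pos (by omega)]
      rw [recover n i]
      have hj : ((2*i + ((2*(j+1):ℕ):ZMod (2*n+1))).val - (2*i : ZMod (2*n+1)).val)/2 - 1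
          = j := by omega
      rw [hj]
    · rw [max_eq_left hlt.le, min_eq_right hlt.le, if_neg (by omega)]
      rw [recover n i]
      have hj : (2*n+1 - ((2*i : ZMod (2*n+1)).val
            - (2*i + ((2*(j+1):ℕ):ZMod (2*n+1))).val))/2 - 1 = j := by omega
      rw [hj]
  · rintro ⟨x, y⟩ hq
    simp only [Finset.mem_sigma, Finset.mem_range] at hq
    obtain ⟨hx, hyx⟩ := hq
    dsimp only
    by_cases hpar : (x - y) % 2 = 0
    · rw [if_pos hpar]
      dsimp only
      have ha : (2 * (((n+1) * y : ℕ) : ZMod (2*n+1))).val = y := by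
        rw [two_recover, ZMod.val_cast_of_lt (by omega)]
      have hb : (2 * (((n+1) * y : ℕ) : ZMod (2*n+1))
          + ((2*((x-y)/2-1+1) : ℕ) : ZMod (2*n+1))).val = x := by
        have e1 : 2*((x-y)/2-1+1) = x - y := by omega
        rw [e1, two_recover, ← Nat.cast_add]
        have e2 : y + (x - y) = x := by omega
        rw [e2, ZMod.val_cast_of_lt hx]
      rw [ha, hb, max_eq_right (le_of_lt hyx), min_eq_left (le_of_lt hyx)]
    · rw [if_neg hpar]
      dsimp only
      have ha : (2 * (((n+1) * x : ℕ) : ZMod (2*n+1))).val = x := by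
        rw [two_recover, ZMod.val_cast_of_lt hx]
      have hb : (2 * (((n+1) * x : ℕ) : ZMod (2*n+1))
          + ((2*((2*n+1-(x-y))/2-1+1) : ℕ) : ZMod (2*n+1))).val = y := by
        have e1 : 2*((2*n+1-(x-y))/2-1+1) = 2*n+1-(x-y) := by omega
        rw [e1, two_recover, ← Nat.cast_add]
        have e2 : x + (2*n+1 - (x-y)) = y + (2*n+1) := by omega
        rw [e2, Nat.cast_add, ZMod.natCast_self, add_zero, ZMod.val_cast_of_lt (by omega)]
      rw [ha, hb, max_eq_left (le_of_lt hyx), min_eq_right (le_of_lt hyx)]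
  · rintro ⟨i, j⟩ hp
    simp only [Finset.mem_product, Finset.mem_univ, Finset.mem_range, true_and] at hp
    dsimp only
    have hca : (((2*i : ZMod (2*n+1)).val : ℕ) : ZMod (2*n+1)) = 2*i :=
      ZMod.natCast_rightInverse _
    have hcb : (((2*i + ((2*(j+1):ℕ):ZMod (2*n+1))).val : ℕ) : ZMod (2*n+1))
        = 2*i + ((2*(j+1):ℕ):ZMod (2*n+1)) := ZMod.natCast_rightInverse _
    rcases key_s4 n (2*i) (2*(j+1)) (by omega) (by omega) with ⟨hlt, heq⟩ | ⟨hlt, heq⟩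
    · rw [max_eq_right hlt.le, min_eq_left hlt.le, hca, hcb]
      have hev : Even ((2*i + ((2*(j+1):ℕ):ZMod (2*n+1))).val + (2*i : ZMod (2*n+1)).val) := by
        rw [Nat.even_iff]; omega
      rw [Even.neg_one_pow hev, one_mul]
    · rw [max_eq_left hlt.le, min_eq_right hlt.le, hca, hcb]
      have hodd : Odd ((2*i : ZMod (2*n+1)).val
          + (2*i + ((2*(j+1):ℕ):ZMod (2*n+1))).val) := by
        rw [Nat.odd_iff]; omega
      have hne : (2*i : ZMod (2*n+1)) ≠ 2*i + ((2*(j+1):ℕ):ZMod (2*n+1)) :=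
        fun h => absurd (congrArg ZMod.val h) (by omega)
      rw [Odd.neg_one_pow hodd, flip_sgn n σ hne]
      ring
end

section
/- The bi-alternating inversion number is invariant under rotation: for all σ ∈ S_{2n+1}, ι̂̂(σ∘ρ) = ι̂̂(σ), where ρ(x) = x+1 mod (2n+1). -/
lemma biAlt_flip {m : ℕ} [NeZero m] (σ : Equiv.Perm (ZMod m)) {a b : ZMod m} (h : a ≠ b) :
    (if (σ a).val < (σ b).val then (1:ℤ) else -1)
      = -(if (σ b).val < (σ a).val then (1:ℤ) else -1) := by
  have hne : (σ a).val ≠ (σ b).val := by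
    intro h'
    exact h (σ.injective (ZMod.val_injective _ h'))
  rcases lt_or_gt_of_ne hne with hlt | hgt
  · simp [hlt, hlt.asymm]
  · simp [hgt, hgt.asymm, not_lt_of_gt hgt]

/-- The bi-alternating inversion number is invariant under rotation:
`ι̂̂(σ ∘ ρ) = ι̂̂(σ)` where `ρ(x) = x + 1 mod (2n+1)`. -/
theorem biAlt_rotation (n : ℕ) (σ : Equiv.Perm (ZMod (2 * n + 1))) :
    biAlt n (fun x => σ (x + 1)) = biAlt n σ := by
  classical
  unfold biAlt
  rw [Finset.sum_sigma', Finset.sum_sigma']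
  refine Finset.sum_nbij'
    (i := fun p => if p.1 = 2*n then ⟨p.2+1, 0⟩ else ⟨p.1+1, p.2+1⟩)
    (j := fun p => if p.2 = 0 then ⟨2*n, p.1-1⟩ else ⟨p.1-1, p.2-1⟩)
    ?_ ?_ ?_ ?_ ?_
  · rintro ⟨x, y⟩ hm
    simp only [Finset.mem_sigma, Finset.mem_range] at hm ⊢
    split_ifs <;> simp_all <;> omega
  · rintro ⟨x, y⟩ hm
    simp only [Finset.mem_sigma, Finset.mem_range] at hm ⊢
    split_ifs <;> simp_all <;> omega
  · rintro ⟨x, y⟩ hm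
    simp only [Finset.mem_sigma, Finset.mem_range] at hm
    dsimp only
    split_ifs <;> simp_all <;> omega
  · rintro ⟨x, y⟩ hm
    simp only [Finset.mem_sigma, Finset.mem_range] at hm
    dsimp only
    split_ifs <;> simp_all <;> omega
  · rintro ⟨x, y⟩ hm
    simp only [Finset.mem_sigma, Finset.mem_range] at hm
    dsimp only
    by_cases hx : x = 2*n
    · subst hx
      rw [if_pos rfl]
      dsimp only
      have h0 : ((2*n : ℕ) : ZMod (2*n+1)) + 1 = 0 := by
        have := ZMod.natCast_self (2*n+1)
        push_cast at this ⊢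
        linear_combination this
      have hy1 : ((y : ℕ) : ZMod (2*n+1)) + 1 = ((y+1 : ℕ) : ZMod (2*n+1)) := by push_cast; ring
      have hne : ((0 : ZMod (2*n+1))) ≠ ((y+1 : ℕ) : ZMod (2*n+1)) := by
        intro h
        have hd := (ZMod.natCast_eq_zero_iff (y+1) (2*n+1)).mp h.symm
        have := Nat.le_of_dvd (by omega) hd
        omega
      simp only [h0, hy1, Nat.cast_zero]
      rw [biAlt_flip σ hne]
      have hp : ((-1:ℤ))^(2*n+y) = (-1)^y := by
        rw [pow_add, Even.neg_one_pow (even_two_mul n), one_mul]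
      rw [hp]
      ring
    · rw [if_neg hx]
      dsimp only
      push_cast
      ring
end

section
/- If σ ∈ S_{2n+1} fixes 2n (i.e. σ(2n) = 2n), then the terms with x = 2n in the bi-alternating inversion number sum to zero; consequently ι̂̂(σ) equals ι̂̂ of the restriction of σ to {0,…,2n−1}, viewed as an element of S_{2n}. -/
/-- The bi-alternating inversion number of a function on `{0,…,N−1}`:
`ι̂̂(σ) = ∑_{0 ≤ y < x ≤ N−1} (−1)^{x+y} sign(σ(x) − σ(y))`. -/
def biAltN (N : ℕ) (σ : ℕ → ℕ) : ℤ :=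
  ∑ x ∈ Finset.range N, ∑ y ∈ Finset.range x,
    (-1 : ℤ) ^ (x + y) * (if σ y < σ x then 1 else -1)

/-- If `σ ∈ S_{2n+1}` fixes `2n`, then the terms with `x = 2n` in the
bi-alternating inversion number sum to zero, and consequently `ι̂̂(σ)` equals `ι̂̂`
of the restriction of `σ` to `{0,…,2n−1}`, an element of `S_{2n}`. -/
theorem biAlt_delete_top (n : ℕ) (σ : ℕ → ℕ) (hinj : Function.Injective σ)
    (hmap : ∀ x, x < 2 * n + 1 → σ x < 2 * n + 1) (hfix : σ (2 * n) = 2 * n) :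
    (∑ y ∈ Finset.range (2 * n),
        (-1 : ℤ) ^ (2 * n + y) * (if σ y < σ (2 * n) then 1 else -1)) = 0 ∧
    biAltN (2 * n + 1) σ = biAltN (2 * n) σ := by
  have key : (∑ y ∈ Finset.range (2 * n),
      (-1 : ℤ) ^ (2 * n + y) * (if σ y < σ (2 * n) then 1 else -1)) = 0 := by
    have h1 : ∀ y ∈ Finset.range (2 * n),
        (-1 : ℤ) ^ (2 * n + y) * (if σ y < σ (2 * n) then 1 else -1)
          = (-1 : ℤ) ^ y := by
      intro y hy
      rw [Finset.mem_range] at hy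
      have hlt : σ y < 2 * n := by
        have h1 := hmap y (by omega)
        have hne : σ y ≠ 2 * n := by
          intro h; exact absurd (hinj (h.trans hfix.symm)) (by omega)
        omega
      rw [hfix, if_pos hlt, mul_one, pow_add, Even.neg_one_pow ⟨n, by ring⟩, one_mul]
    rw [Finset.sum_congr rfl h1, neg_one_geom_sum, if_pos ⟨n, by ring⟩]
  refine ⟨key, ?_⟩
  unfold biAltN
  rw [Finset.sum_range_succ, key, add_zero]
end

section
/- The distribution of ι̂̂(σ) for σ uniform in S_{2n+1} equals the distribution of ι̂̂(σ) for σ uniform in S_{2n}, which in turn equals the distribution of the writhe w(π) for π uniform in S_{2n+1}. -/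
/-- The bi-alternating inversion number of a permutation of `Fin N`:
`ι̂̂(σ) = ∑_{0 ≤ y < x < N} (−1)^{x+y} sign(σ(x) − σ(y))`. -/
def biAltF (N : ℕ) (σ : Equiv.Perm (Fin N)) : ℤ :=
  ∑ x : Fin N, ∑ y : Fin N,
    if y < x then (-1 : ℤ) ^ ((x : ℕ) + (y : ℕ)) * (if σ y < σ x then 1 else -1) else 0

namespace BAW

def sgn (a b : ℕ) : ℤ := if a < b then 1 else -1

lemma sgn_swap {a b : ℕ} (h : a ≠ b) : (-1) * sgn a b = sgn b a := by
  unfold sgn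
  rcases lt_trichotomy a b with h' | h' | h'
  · simp [h', (show ¬ b < a by omega)]
  · exact absurd h' h
  · simp [h', (show ¬ a < b by omega), le_of_lt h']

variable (n : ℕ)

/-- order equiv Fin N ≃ ZMod N -/
def vE : Fin (2*n+1) ≃ ZMod (2*n+1) where
  toFun x := (x.val : ZMod (2*n+1))
  invFun z := ⟨z.val, ZMod.val_lt z⟩
  left_inv x := by ext; simp [ZMod.val_natCast, Nat.mod_eq_of_lt x.isLt]
  right_inv z := ZMod.natCast_rightInverse z

lemma vE_symm_lt_iff (a b : ZMod (2*n+1)) :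
    (vE n).symm a < (vE n).symm b ↔ a.val < b.val := Iff.rfl

/-- position relabeling: multiply by n+1 (inverse of 2 mod 2n+1) -/
def eE : Fin (2*n+1) ≃ ZMod (2*n+1) where
  toFun x := (((n+1) * x.val : ℕ) : ZMod (2*n+1))
  invFun z := ⟨(2 * z.val) % (2*n+1), Nat.mod_lt _ (by omega)⟩
  left_inv x := by
    ext
    show (2 * (((n+1) * x.val : ℕ) : ZMod (2*n+1)).val) % (2*n+1) = x.val
    rw [ZMod.val_natCast]
    have h1 : (2 * (((n+1) * x.val) % (2*n+1))) % (2*n+1)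
        = (2 * ((n+1) * x.val)) % (2*n+1) :=
      Nat.ModEq.mul_left 2 (Nat.mod_modEq _ _)
    rw [h1, show 2 * ((n+1) * x.val) = x.val + x.val * (2*n+1) by ring,
      Nat.add_mul_mod_self_right, Nat.mod_eq_of_lt x.isLt]
  right_inv z := by
    show ((((n+1) * ((2 * z.val) % (2*n+1)) : ℕ)) : ZMod (2*n+1)) = z
    push_cast
    rw [ZMod.natCast_mod]
    push_cast
    rw [show ((n : ZMod (2*n+1)) + 1) * (2 * (z.val : ZMod (2*n+1)))
        = ((2*n+1 : ℕ) : ZMod (2*n+1)) * (z.val : ZMod (2*n+1)) + (z.val : ZMod (2*n+1)) by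
      push_cast; ring]
    rw [ZMod.natCast_self, zero_mul, zero_add, ZMod.natCast_val, ZMod.cast_id]

lemma eE_sub_val {x y : Fin (2*n+1)} (h : y < x) :
    (eE n x - eE n y).val
      = if (x.val - y.val) % 2 = 0 then (x.val - y.val)/2 else n + 1 + (x.val - y.val)/2 := by
  have hxy : y.val ≤ x.val := le_of_lt h
  have hsub : eE n x - eE n y = (((n+1) * (x.val - y.val) : ℕ) : ZMod (2*n+1)) := by
    show (((n+1) * x.val : ℕ) : ZMod (2*n+1)) - (((n+1) * y.val : ℕ)) = _
    rw [Nat.mul_sub, Nat.cast_sub (Nat.mul_le_mul_left _ hxy)]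
  rw [hsub, ZMod.val_natCast]
  set d := x.val - y.val with hd
  have hd1 : 1 ≤ d := by omega
  have hd2 : d ≤ 2*n := by have := x.isLt; omega
  rcases Nat.even_or_odd d with ⟨m, hm⟩ | ⟨m, hm⟩
  · have h2 : (n+1)*d = m + m*(2*n+1) := by rw [hm]; ring
    rw [h2, Nat.add_mul_mod_self_right, Nat.mod_eq_of_lt (by omega), if_pos (by omega)]
    omega
  · have h2 : (n+1)*d = (n+1+m) + m*(2*n+1) := by rw [hm]; ring
    rw [h2, Nat.add_mul_mod_self_right, Nat.mod_eq_of_lt (by omega), if_neg (by omega)]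
    omega

lemma eE_sub_pos {x y : Fin (2*n+1)} (h : y < x) : 1 ≤ (eE n x - eE n y).val := by
  rw [eE_sub_val n h]
  have : 1 ≤ x.val - y.val := by omega
  split <;> omega

lemma eE_sub_val_rev {x y : Fin (2*n+1)} (h : y < x) :
    (eE n y - eE n x).val = (2*n+1) - (eE n x - eE n y).val := by
  have h1 := eE_sub_pos n h
  have hne : eE n x - eE n y ≠ 0 := by
    intro hz
    rw [hz, ZMod.val_zero] at h1; omega
  haveI : NeZero (eE n x - eE n y) := ⟨hne⟩
  rw [show eE n y - eE n x = -(eE n x - eE n y) by ring, ZMod.val_neg_of_ne_zero]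

/-- the intermediate "cyclic pairs" sum -/
def Tsum (π : ZMod (2*n+1) → ZMod (2*n+1)) : ℤ :=
  ∑ p ∈ Finset.univ.filter
      (fun p : ZMod (2*n+1) × ZMod (2*n+1) => 1 ≤ (p.2 - p.1).val ∧ (p.2 - p.1).val ≤ n),
    sgn (π p.1).val (π p.2).val

end BAW

namespace BAW

lemma writheP_eq_Tsum (π : ZMod (2*n+1) → ZMod (2*n+1)) : writheP n π = Tsum n π := by
  unfold writheP Tsum
  rw [← Finset.sum_product']
  refine Finset.sum_nbij' (fun p => (p.1, p.1 + ((p.2 + 1 : ℕ) : ZMod (2*n+1))))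
    (fun q => (q.1, (q.2 - q.1).val - 1)) ?_ ?_ ?_ ?_ ?_
  · rintro ⟨i, j⟩ hij
    simp only [Finset.mem_product, Finset.mem_univ, Finset.mem_range, true_and] at hij
    simp only [Finset.mem_filter, Finset.mem_univ, true_and]
    rw [add_sub_cancel_left, ZMod.val_natCast, Nat.mod_eq_of_lt (by omega)]
    omega
  · rintro ⟨a, b⟩ hab
    simp only [Finset.mem_filter, Finset.mem_univ, true_and] at hab
    simp only [Finset.mem_product, Finset.mem_univ, Finset.mem_range, true_and]
    omega
  · rintro ⟨i, j⟩ hij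
    simp only [Finset.mem_product, Finset.mem_univ, Finset.mem_range, true_and] at hij
    simp only [add_sub_cancel_left, ZMod.val_natCast,
      Nat.mod_eq_of_lt (by omega : j + 1 < 2*n+1), Nat.add_sub_cancel]
  · rintro ⟨a, b⟩ hab
    simp only [Finset.mem_filter, Finset.mem_univ, true_and] at hab
    simp only [Prod.mk.injEq, true_and]
    rw [show (b - a).val - 1 + 1 = (b - a).val by omega, ZMod.natCast_val, ZMod.cast_id]
    ring
  · rintro ⟨i, j⟩ _
    rfl

end BAW

namespace BAW

variable (n : ℕ)

lemma vE_symm_val (z : ZMod (2*n+1)) : ((vE n).symm z).val = z.val := rfl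

/-- conjugating map `Perm (ZMod N) → Perm (Fin N)` -/
def psiE (π : Equiv.Perm (ZMod (2*n+1))) : Equiv.Perm (Fin (2*n+1)) :=
  (eE n).trans (π.trans (vE n).symm)

lemma psiE_apply (π : Equiv.Perm (ZMod (2*n+1))) (x : Fin (2*n+1)) :
    psiE n π x = (vE n).symm (π (eE n x)) := rfl

lemma biAltF_psiE (π : Equiv.Perm (ZMod (2*n+1))) :
    biAltF (2*n+1) (psiE n π) = Tsum n ⇑π := by
  unfold biAltF Tsum
  rw [show (∑ x : Fin (2*n+1), ∑ y : Fin (2*n+1),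
      if y < x then (-1 : ℤ) ^ ((x : ℕ) + (y : ℕ))
        * (if psiE n π y < psiE n π x then 1 else -1) else 0)
    = ∑ p ∈ Finset.univ.filter (fun p : Fin (2*n+1) × Fin (2*n+1) => p.2 < p.1),
        (-1 : ℤ) ^ (p.1.val + p.2.val)
          * (if (π (eE n p.2)).val < (π (eE n p.1)).val then 1 else -1) by
    rw [Finset.sum_filter, ← Finset.univ_product_univ, Finset.sum_product]
    refine Finset.sum_congr rfl fun x _ => Finset.sum_congr rfl fun y _ => ?_
    rcases lt_or_ge y x with h | h
    · rw [if_pos h, if_pos h]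
      rfl
    · rw [if_neg (not_lt.mpr h), if_neg (not_lt.mpr h)]]
  refine Finset.sum_nbij'
    (fun p => if (p.1.val + p.2.val) % 2 = 0 then (eE n p.2, eE n p.1) else (eE n p.1, eE n p.2))
    (fun q => if (eE n).symm q.1 < (eE n).symm q.2 then ((eE n).symm q.2, (eE n).symm q.1)
      else ((eE n).symm q.1, (eE n).symm q.2)) ?_ ?_ ?_ ?_ ?_
  · rintro ⟨x, y⟩ hp
    simp only [Finset.mem_filter, Finset.mem_univ, true_and] at hp ⊢
    try dsimp only at hp ⊢
    have hyx : (y : ℕ) < (x : ℕ) := hp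
    have hd := eE_sub_val n hp
    have hdrev := eE_sub_val_rev n hp
    have hlt := x.isLt
    by_cases hpar : (x.val + y.val) % 2 = 0
    · rw [if_pos hpar]
      have hev : (x.val - y.val) % 2 = 0 := by omega
      rw [if_pos hev] at hd
      dsimp only
      omega
    · rw [if_neg hpar]
      have hod : ¬ (x.val - y.val) % 2 = 0 := by omega
      rw [if_neg hod] at hd
      dsimp only
      omega
  · rintro ⟨a, b⟩ hq
    simp only [Finset.mem_filter, Finset.mem_univ, true_and] at hq ⊢
    try dsimp only at hq ⊢
    have hne : (eE n).symm a ≠ (eE n).symm b := by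
      intro hc
      have hab : a = b := by simpa using congrArg (eE n) hc
      rw [hab, sub_self, ZMod.val_zero] at hq
      omega
    by_cases hlt : (eE n).symm a < (eE n).symm b
    · rw [if_pos hlt]; exact hlt
    · rw [if_neg hlt]
      exact lt_of_le_of_ne (not_lt.mp hlt) hne.symm
  · rintro ⟨x, y⟩ hp
    simp only [Finset.mem_filter, Finset.mem_univ, true_and] at hp
    try dsimp only at hp ⊢
    by_cases hpar : (x.val + y.val) % 2 = 0
    · rw [if_pos hpar]
      simp only [Equiv.symm_apply_apply]
      rw [if_pos hp]
    · rw [if_neg hpar]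
      simp only [Equiv.symm_apply_apply]
      rw [if_neg (lt_asymm hp)]
  · rintro ⟨a, b⟩ hq
    simp only [Finset.mem_filter, Finset.mem_univ, true_and] at hq
    try dsimp only at hq ⊢
    have hne : (eE n).symm a ≠ (eE n).symm b := by
      intro hc
      have hab : a = b := by simpa using congrArg (eE n) hc
      rw [hab, sub_self, ZMod.val_zero] at hq
      omega
    by_cases hlt : (eE n).symm a < (eE n).symm b
    · rw [if_pos hlt]
      dsimp only
      have hnat : (((eE n).symm a : Fin (2*n+1)) : ℕ) < (((eE n).symm b : Fin (2*n+1)) : ℕ) := hlt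
      have hd := eE_sub_val n hlt
      simp only [Equiv.apply_symm_apply] at hd
      have hpar : ((((eE n).symm b : Fin (2*n+1)) : ℕ) + (((eE n).symm a : Fin (2*n+1)) : ℕ)) % 2 = 0 := by
        by_cases hh : ((((eE n).symm b : Fin (2*n+1)) : ℕ) - (((eE n).symm a : Fin (2*n+1)) : ℕ)) % 2 = 0
        · omega
        · rw [if_neg hh] at hd
          omega
      rw [if_pos hpar]
      simp only [Equiv.apply_symm_apply]
    · rw [if_neg hlt]
      dsimp only
      have hlt2 : (eE n).symm b < (eE n).symm a := lt_of_le_of_ne (not_lt.mp hlt) hne.symm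
      have hnat : (((eE n).symm b : Fin (2*n+1)) : ℕ) < (((eE n).symm a : Fin (2*n+1)) : ℕ) := hlt2
      have hd := eE_sub_val n hlt2
      have hdrev := eE_sub_val_rev n hlt2
      simp only [Equiv.apply_symm_apply] at hd hdrev
      have hpar : ¬ ((((eE n).symm a : Fin (2*n+1)) : ℕ) + (((eE n).symm b : Fin (2*n+1)) : ℕ)) % 2 = 0 := by
        by_cases hh : ((((eE n).symm a : Fin (2*n+1)) : ℕ) - (((eE n).symm b : Fin (2*n+1)) : ℕ)) % 2 = 0
        · rw [if_pos hh] at hd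
          have h2 := ((eE n).symm a).isLt
          omega
        · omega
      rw [if_neg hpar]
      simp only [Equiv.apply_symm_apply]
  · rintro ⟨x, y⟩ hp
    simp only [Finset.mem_filter, Finset.mem_univ, true_and] at hp
    try dsimp only at hp ⊢
    have hyx : (y : ℕ) < (x : ℕ) := hp
    by_cases hpar : (x.val + y.val) % 2 = 0
    · rw [if_pos hpar, (Nat.even_iff.mpr hpar).neg_one_pow, one_mul]
      rfl
    · rw [if_neg hpar, (Nat.odd_iff.mpr (by omega)).neg_one_pow]
      have hne : (π (eE n y)).val ≠ (π (eE n x)).val := by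
        intro hc
        exact absurd ((eE n).injective (π.injective (ZMod.val_injective _ hc)))
          (by intro hh; rw [hh] at hyx; omega)
      rw [show (if (π (eE n y)).val < (π (eE n x)).val then (1:ℤ) else -1)
          = sgn (π (eE n y)).val (π (eE n x)).val from rfl, sgn_swap hne]


def psiInv (σ : Equiv.Perm (Fin (2*n+1))) : Equiv.Perm (ZMod (2*n+1)) :=
  (eE n).symm.trans (σ.trans (vE n))

lemma psiE_psiInv (σ : Equiv.Perm (Fin (2*n+1))) : psiE n (psiInv n σ) = σ := by
  ext x
  simp [psiE, psiInv]

lemma psiInv_psiE (π : Equiv.Perm (ZMod (2*n+1))) : psiInv n (psiE n π) = π := by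
  ext z
  simp [psiE, psiInv]

lemma eE_zero : eE n 0 = 0 := by
  show (((n+1) * (0 : Fin (2*n+1)).val : ℕ) : ZMod (2*n+1)) = 0
  simp

lemma vE_symm_zero : (vE n).symm 0 = 0 := by
  ext
  show (0 : ZMod (2*n+1)).val = (0 : Fin (2*n+1)).val
  simp

lemma psiE_zero_iff (π : Equiv.Perm (ZMod (2*n+1))) : psiE n π 0 = 0 ↔ π 0 = 0 := by
  rw [psiE_apply, eE_zero, ← vE_symm_zero n]
  exact EmbeddingLike.apply_eq_iff_eq _

lemma biAltF_psiE_writhe (π : Equiv.Perm (ZMod (2*n+1))) :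
    biAltF (2*n+1) (psiE n π) = writheP n ⇑π := by
  rw [biAltF_psiE, writheP_eq_Tsum]

lemma card_biAlt_eq_card_writhe (k : ℤ) :
    (Finset.univ.filter (fun σ : Equiv.Perm (Fin (2*n+1)) => biAltF (2*n+1) σ = k)).card
      = (Finset.univ.filter (fun π : Equiv.Perm (ZMod (2*n+1)) => writheP n ⇑π = k)).card := by
  refine Finset.card_nbij' (fun σ => psiInv n σ) (fun π => psiE n π) ?_ ?_ ?_ ?_
  · intro σ hσ
    simp only [Finset.mem_coe, Finset.mem_filter, Finset.mem_univ, true_and] at hσ ⊢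
    rw [← biAltF_psiE_writhe, psiE_psiInv]
    exact hσ
  · intro π hπ
    simp only [Finset.mem_coe, Finset.mem_filter, Finset.mem_univ, true_and] at hπ ⊢
    rw [biAltF_psiE_writhe]
    exact hπ
  · intro σ _
    exact psiE_psiInv n σ
  · intro π _
    exact psiInv_psiE n π

lemma card_biAlt_eq_card_writhe_zero (k : ℤ) :
    (Finset.univ.filter
        (fun σ : Equiv.Perm (Fin (2*n+1)) => biAltF (2*n+1) σ = k ∧ σ 0 = 0)).card
      = (Finset.univ.filter
        (fun π : Equiv.Perm (ZMod (2*n+1)) => writheP n ⇑π = k ∧ π 0 = 0)).card := by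
  refine Finset.card_nbij' (fun σ => psiInv n σ) (fun π => psiE n π) ?_ ?_ ?_ ?_
  · intro σ hσ
    simp only [Finset.mem_coe, Finset.mem_filter, Finset.mem_univ, true_and] at hσ ⊢
    constructor
    · rw [← biAltF_psiE_writhe, psiE_psiInv]
      exact hσ.1
    · rw [← psiE_zero_iff, psiE_psiInv]
      exact hσ.2
  · intro π hπ
    simp only [Finset.mem_coe, Finset.mem_filter, Finset.mem_univ, true_and] at hπ ⊢
    exact ⟨by rw [biAltF_psiE_writhe]; exact hπ.1, (psiE_zero_iff n π).mpr hπ.2⟩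
  · intro σ _
    exact psiE_psiInv n σ
  · intro π _
    exact psiInv_psiE n π

lemma writheP_shift (π : ZMod (2*n+1) → ZMod (2*n+1)) (s : ZMod (2*n+1)) :
    writheP n (fun i => π (i + s)) = writheP n π := by
  unfold writheP
  refine Finset.sum_nbij' (fun i => i + s) (fun i => i - s) (by simp) (by simp)
    (fun i _ => by simp) (fun i _ => by simp) ?_
  intro i _
  refine Finset.sum_congr rfl fun j _ => ?_
  rw [add_right_comm]

lemma card_writhe_orbit (k : ℤ) :
    (Finset.univ.filter (fun π : Equiv.Perm (ZMod (2*n+1)) => writheP n ⇑π = k)).card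
      = (2*n+1) * (Finset.univ.filter
          (fun π : Equiv.Perm (ZMod (2*n+1)) => writheP n ⇑π = k ∧ π 0 = 0)).card := by
  have key : (Finset.univ.filter (fun π : Equiv.Perm (ZMod (2*n+1)) => writheP n ⇑π = k)).card
      = ((Finset.univ : Finset (ZMod (2*n+1))) ×ˢ Finset.univ.filter
          (fun π : Equiv.Perm (ZMod (2*n+1)) => writheP n ⇑π = k ∧ π 0 = 0)).card := by
    refine Finset.card_nbij'
      (fun π => (π.symm 0, (Equiv.addRight (π.symm 0)).trans π))
      (fun q => (Equiv.addRight q.1).symm.trans q.2) ?_ ?_ ?_ ?_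
    · intro π hπ
      simp only [Finset.mem_coe, Finset.mem_filter, Finset.mem_univ, true_and] at hπ
      simp only [Finset.mem_coe, Finset.mem_product, Finset.mem_filter, Finset.mem_univ, true_and]
      refine ⟨?_, ?_⟩
      · rw [show ⇑((Equiv.addRight (π.symm 0)).trans π)
            = (fun i => π (i + π.symm 0)) from rfl, writheP_shift]
        exact hπ
      · show π (0 + π.symm 0) = 0
        rw [zero_add, Equiv.apply_symm_apply]
    · rintro ⟨s, ρ⟩ hq
      simp only [Finset.mem_coe, Finset.mem_product, Finset.mem_filter, Finset.mem_univ, true_and] at hq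
      simp only [Finset.mem_coe, Finset.mem_filter, Finset.mem_univ, true_and]
      rw [show ⇑((Equiv.addRight s).symm.trans ρ) = (fun i => ρ (i + (-s))) from
        funext fun i => by simp [sub_eq_add_neg], writheP_shift]
      exact hq.1
    · intro π _
      dsimp only
      rw [← Equiv.trans_assoc, Equiv.symm_trans_self, Equiv.refl_trans]
    · rintro ⟨s, ρ⟩ hq
      simp only [Finset.mem_coe, Finset.mem_product, Finset.mem_filter, Finset.mem_univ, true_and] at hq
      have hρ0 : ρ.symm 0 = 0 := (Equiv.symm_apply_eq ρ).mpr hq.2.symm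
      have hs : ((Equiv.addRight s).symm.trans ρ).symm 0 = s := by
        show (Equiv.addRight s).symm.symm (ρ.symm 0) = s
        rw [hρ0, Equiv.symm_symm]
        show (0 : ZMod (2*n+1)) + s = s
        rw [zero_add]
      dsimp only
      rw [hs, ← Equiv.trans_assoc, Equiv.self_trans_symm, Equiv.refl_trans]
  rw [key, Finset.card_product, Finset.card_univ, ZMod.card]


lemma neg_one_sum (m : ℕ) : ∑ i ∈ Finset.range (2*m), (-1 : ℤ)^i = 0 := by
  induction m with
  | zero => simp
  | succ m ih =>
    rw [show 2*(m+1) = (2*m) + 1 + 1 by ring, Finset.sum_range_succ, Finset.sum_range_succ, ih]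
    ring

lemma fin_neg_one_sum (m : ℕ) : ∑ x : Fin (2*m), (-1 : ℤ)^((x : ℕ) + 1) = 0 := by
  rw [Fin.sum_univ_eq_sum_range (fun i => (-1 : ℤ)^(i+1))]
  have : ∀ i ∈ Finset.range (2*m), (-1 : ℤ)^(i+1) = (-1)^i * (-1) := by
    intro i _
    rw [pow_succ]
  rw [Finset.sum_congr rfl this, ← Finset.sum_mul, neg_one_sum, zero_mul]

lemma decomposeFin_fst (m : ℕ) (σ : Equiv.Perm (Fin (m+1))) :
    (Equiv.Perm.decomposeFin σ).1 = σ 0 := by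
  conv_rhs => rw [← Equiv.symm_apply_apply Equiv.Perm.decomposeFin σ]
  exact (Equiv.Perm.decomposeFin_symm_apply_zero _ _).symm

lemma decomposeFin_succ (m : ℕ) (σ : Equiv.Perm (Fin (m+1))) (h0 : σ 0 = 0) (x : Fin m) :
    σ x.succ = ((Equiv.Perm.decomposeFin σ).2 x).succ := by
  conv_lhs => rw [← Equiv.symm_apply_apply Equiv.Perm.decomposeFin σ]
  rw [show Equiv.Perm.decomposeFin σ
      = ((Equiv.Perm.decomposeFin σ).1, (Equiv.Perm.decomposeFin σ).2) from rfl,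
    Equiv.Perm.decomposeFin_symm_apply_succ, decomposeFin_fst, h0, Equiv.swap_self]
  rfl

lemma biAlt_delete (σ : Equiv.Perm (Fin (2*n+1))) (h0 : σ 0 = 0) :
    biAltF (2*n+1) σ = biAltF (2*n) (Equiv.Perm.decomposeFin σ).2 := by
  set τ := (Equiv.Perm.decomposeFin σ).2 with hτ
  unfold biAltF
  rw [Fin.sum_univ_succ]
  simp only [Fin.not_lt_zero, if_false, Finset.sum_const_zero, zero_add]
  have hterm : ∀ x : Fin (2*n), (∑ y : Fin (2*n+1),
      if y < x.succ then (-1 : ℤ) ^ ((x.succ : ℕ) + (y : ℕ))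
        * (if σ y < σ x.succ then 1 else -1) else 0)
      = (-1 : ℤ)^((x : ℕ) + 1) + ∑ y : Fin (2*n),
          if y < x then (-1 : ℤ) ^ ((x : ℕ) + (y : ℕ)) * (if τ y < τ x then 1 else -1) else 0 := by
    intro x
    rw [Fin.sum_univ_succ]
    congr 1
    · rw [if_pos (Fin.succ_pos x)]
      have h1 : σ (0 : Fin (2*n+1)) < σ x.succ := by
        rw [h0, decomposeFin_succ _ σ h0 x]
        exact Fin.succ_pos _
      rw [if_pos h1, mul_one]
      norm_num [Fin.val_succ]
    · refine Finset.sum_congr rfl fun y _ => ?_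
      rw [decomposeFin_succ _ σ h0 x, decomposeFin_succ _ σ h0 y, ← hτ]
      by_cases hyx : y < x
      · rw [if_pos (Fin.succ_lt_succ_iff.mpr hyx), if_pos hyx]
        congr 1
        · rw [Fin.val_succ, Fin.val_succ, show (x : ℕ) + 1 + ((y : ℕ) + 1) = ((x : ℕ) + (y : ℕ)) + 2 by ring,
            pow_add]
          norm_num
        · simp only [Fin.succ_lt_succ_iff]
      · rw [if_neg (fun hc => hyx (Fin.succ_lt_succ_iff.mp hc)), if_neg hyx]
  rw [Finset.sum_congr rfl (fun x _ => hterm x), Finset.sum_add_distrib, fin_neg_one_sum, zero_add]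

lemma card_biAlt_zero_eq (k : ℤ) :
    (Finset.univ.filter
        (fun σ : Equiv.Perm (Fin (2*n+1)) => biAltF (2*n+1) σ = k ∧ σ 0 = 0)).card
      = (Finset.univ.filter (fun τ : Equiv.Perm (Fin (2*n)) => biAltF (2*n) τ = k)).card := by
  refine Finset.card_nbij' (fun σ => (Equiv.Perm.decomposeFin σ).2)
    (fun τ => Equiv.Perm.decomposeFin.symm (0, τ)) ?_ ?_ ?_ ?_
  · intro σ hσ
    simp only [Finset.mem_coe, Finset.mem_filter, Finset.mem_univ, true_and] at hσ ⊢
    rw [← biAlt_delete n σ hσ.2]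
    exact hσ.1
  · intro τ hτ
    simp only [Finset.mem_coe, Finset.mem_filter, Finset.mem_univ, true_and] at hτ ⊢
    have hz : Equiv.Perm.decomposeFin.symm ((0 : Fin (2*n+1)), τ) 0 = 0 :=
      Equiv.Perm.decomposeFin_symm_apply_zero 0 τ
    refine ⟨?_, hz⟩
    rw [biAlt_delete n _ hz, Equiv.apply_symm_apply]
    exact hτ
  · intro σ hσ
    simp only [Finset.mem_coe, Finset.mem_filter, Finset.mem_univ, true_and] at hσ
    have : ((0 : Fin (2*n+1)), (Equiv.Perm.decomposeFin σ).2) = Equiv.Perm.decomposeFin σ := by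
      rw [show Equiv.Perm.decomposeFin σ
        = ((Equiv.Perm.decomposeFin σ).1, (Equiv.Perm.decomposeFin σ).2) from rfl]
      rw [decomposeFin_fst, hσ.2]
    dsimp only
    rw [this, Equiv.symm_apply_apply]
  · intro τ _
    dsimp only
    rw [Equiv.apply_symm_apply]

end BAW

/-- The distribution of `ι̂̂` on uniform `S_{2n+1}` equals the distribution of `ι̂̂` on
uniform `S_{2n}`, and equals the distribution of the writhe on uniform `S_{2n+1}`. -/
theorem biAlt_writhe_equidistributed (n : ℕ) (hn : 0 < n) (k : ℤ) :
    ((Finset.univ.filter (fun σ : Equiv.Perm (Fin (2 * n + 1)) => biAltF (2 * n + 1) σ = k)).card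
        * Nat.factorial (2 * n)
      = (Finset.univ.filter (fun σ : Equiv.Perm (Fin (2 * n)) => biAltF (2 * n) σ = k)).card
        * Nat.factorial (2 * n + 1)) ∧
    (Finset.univ.filter (fun σ : Equiv.Perm (Fin (2 * n + 1)) => biAltF (2 * n + 1) σ = k)).card
      = (Finset.univ.filter (fun π : Equiv.Perm (ZMod (2 * n + 1)) => writheP n π = k)).card := by
  constructor
  · rw [BAW.card_biAlt_eq_card_writhe n k, BAW.card_writhe_orbit n k,
      ← BAW.card_biAlt_eq_card_writhe_zero n k, BAW.card_biAlt_zero_eq n k,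
      Nat.factorial_succ]
    ring
  · exact BAW.card_biAlt_eq_card_writhe n k
end

section
/- For every permutation π ∈ S_{2n+1}, |w(π)| ≤ n². -/
open Finset

private lemma gaussZ (k : ℕ) : (∑ x ∈ range (k+1), (x:ℤ)) * 2 = (k+1) * k := by
  have h := Finset.sum_range_id_mul_two (k+1)
  rw [Nat.add_sub_cancel] at h
  rw [← Nat.cast_sum]
  exact_mod_cast h

private lemma two_T (n : ℕ) : (∑ v ∈ range (2*n+1), min (v:ℤ) (n:ℤ)) * 2 = n * (3*n+1) := by
  rw [show 2*n+1 = (n+1)+n by ring, Finset.sum_range_add]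
  have h1 : ∑ x ∈ range (n+1), min (x:ℤ) (n:ℤ) = ∑ x ∈ range (n+1), (x:ℤ) :=
    Finset.sum_congr rfl (fun x hx => by
      rw [mem_range] at hx
      rw [min_eq_left (by omega)])
  have h2 : ∑ x ∈ range n, (min (↑(n+1+x)) (n:ℤ)) = ∑ _x ∈ range n, (n:ℤ) :=
    Finset.sum_congr rfl (fun x hx => by
      rw [min_eq_right (by push_cast; omega)])
  rw [h1, h2, Finset.sum_const, card_range, add_mul, gaussZ n]
  ring

private lemma two_M (n : ℕ) : (∑ v ∈ range (2*n+1), max (v:ℤ) (n:ℤ)) * 2 = n * (5*n+3) := by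
  have hmm : ∑ v ∈ range (2*n+1), min (v:ℤ) (n:ℤ) + ∑ v ∈ range (2*n+1), max (v:ℤ) (n:ℤ)
      = ∑ v ∈ range (2*n+1), (v:ℤ) + ∑ _v ∈ range (2*n+1), (n:ℤ) := by
    rw [← Finset.sum_add_distrib, ← Finset.sum_add_distrib]
    exact Finset.sum_congr rfl (fun v _ => min_add_max _ _)
  have hg : (∑ x ∈ range (2*n+1), (x:ℤ)) * 2 = (2*n+1) * (2*n) := by
    have := gaussZ (2*n); rw [show 2*n+1 = (2*n)+1 by ring]
    push_cast at this ⊢; linarith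
  have h1 := two_T n
  rw [Finset.sum_const, card_range, nsmul_eq_mul] at hmm
  push_cast at hmm h1 hg ⊢
  nlinarith [hmm, hg, h1]

private lemma sum_valZ {m : ℕ} [NeZero m] (F : ℕ → ℤ) :
    ∑ b : ZMod m, F b.val = ∑ v ∈ range m, F v := by
  refine Finset.sum_nbij' (fun b => b.val) (fun v => (v : ZMod m)) ?_ ?_ ?_ ?_ ?_
  · intro b _; simpa [mem_range] using b.val_lt
  · intro v _; exact mem_univ _
  · intro b _; simp [ZMod.natCast_val, ZMod.cast_id]
  · intro v hv; rw [mem_range] at hv; exact ZMod.val_cast_of_lt hv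
  · intro b _; rfl

private lemma card_valP {m : ℕ} [NeZero m] (p : ℕ → Prop) [DecidablePred p] :
    #(univ.filter (fun a : ZMod m => p a.val)) = #((range m).filter p) := by
  refine Finset.card_nbij' (fun a => a.val) (fun v => (v : ZMod m)) ?_ ?_ ?_ ?_
  · intro a ha; rw [mem_coe, mem_filter] at ha ⊢
    exact ⟨mem_range.mpr a.val_lt, ha.2⟩
  · intro v hv; rw [mem_coe, mem_filter] at hv ⊢
    refine ⟨mem_univ _, ?_⟩
    rw [ZMod.val_cast_of_lt (mem_range.mp hv.1)]; exact hv.2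
  · intro a _; simp [ZMod.natCast_val, ZMod.cast_id]
  · intro v hv; rw [mem_coe, mem_filter, mem_range] at hv; exact ZMod.val_cast_of_lt hv.1

/-- the ascent count -/
private def Cnt (n : ℕ) (π : Equiv.Perm (ZMod (2*n+1))) (b : ZMod (2*n+1)) : ℕ :=
  #(univ.filter (fun a : ZMod (2*n+1) => (π.symm b - π.symm a).val ∈ Icc 1 n ∧ a.val < b.val))



/-- For every permutation `π ∈ S_{2n+1}`, `|w(π)| ≤ n²`. -/
theorem writhe_bound (n : ℕ) (π : Equiv.Perm (ZMod (2 * n + 1))) :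
    |writheP n π| ≤ (n : ℤ) ^ 2 := by
  -- cardinality of the short-distance set
  have hD : #(univ.filter (fun d : ZMod (2*n+1) => d.val ∈ Icc 1 n)) = n := by
    rw [card_valP (fun v => v ∈ Icc 1 n)]
    have h : (range (2*n+1)).filter (fun v => v ∈ Icc 1 n) = Icc 1 n := by
      ext v; simp only [mem_filter, mem_range, mem_Icc]; omega
    rw [h, Nat.card_Icc]
    omega
  have hA : ∀ b : ZMod (2*n+1),
      #(univ.filter (fun a : ZMod (2*n+1) => (π.symm b - π.symm a).val ∈ Icc 1 n)) = n := by
    intro b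
    refine Eq.trans (Finset.card_nbij' (fun a => π.symm b - π.symm a) (fun d => π (π.symm b - d)) ?_ ?_ ?_ ?_) hD
    · intro a ha; rw [mem_coe, mem_filter] at ha ⊢; exact ⟨mem_univ _, ha.2⟩
    · intro d hd; rw [mem_coe, mem_filter] at hd ⊢
      refine ⟨mem_univ _, ?_⟩
      simpa [sub_sub_cancel] using hd.2
    · intro a _; simp [sub_sub_cancel]
    · intro d _; simp [sub_sub_cancel]
  have hB : ∀ b : ZMod (2*n+1),
      #(univ.filter (fun a : ZMod (2*n+1) => a.val < b.val)) = b.val := by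
    intro b
    rw [card_valP (fun v => v < b.val)]
    have hb := b.val_lt
    have h : (range (2*n+1)).filter (fun v => v < b.val) = range b.val := by
      ext v; simp only [mem_filter, mem_range]; omega
    rw [h, card_range]
  -- bounds on the count
  have hC1 : ∀ b, Cnt n π b ≤ n := by
    intro b
    refine le_trans (Finset.card_le_card ?_) (le_of_eq (hA b))
    intro a ha; rw [mem_filter] at ha ⊢; exact ⟨ha.1, ha.2.1⟩
  have hC2 : ∀ b, Cnt n π b ≤ (b : ZMod (2*n+1)).val := by
    intro b
    refine le_trans (Finset.card_le_card ?_) (le_of_eq (hB b))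
    intro a ha; rw [mem_filter] at ha ⊢; exact ⟨ha.1, ha.2.2⟩
  have hC3 : ∀ b : ZMod (2*n+1), n + b.val ≤ 2*n + Cnt n π b := by
    intro b
    have hu := Finset.card_union_add_card_inter
      (univ.filter (fun a : ZMod (2*n+1) => (π.symm b - π.symm a).val ∈ Icc 1 n))
      (univ.filter (fun a : ZMod (2*n+1) => a.val < b.val))
    rw [hA b, hB b, ← Finset.filter_and] at hu
    have hsubE : (univ.filter (fun a : ZMod (2*n+1) => (π.symm b - π.symm a).val ∈ Icc 1 n))
        ∪ (univ.filter (fun a : ZMod (2*n+1) => a.val < b.val)) ⊆ univ.erase b := by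
      intro a ha
      rw [mem_union] at ha
      rw [mem_erase]
      refine ⟨?_, mem_univ _⟩
      rcases ha with h | h <;> rw [mem_filter] at h
      · rintro rfl
        rw [sub_self] at h
        simp [ZMod.val_zero, mem_Icc] at h
      · rintro rfl; exact lt_irrefl _ h.2
    have hcard : #((univ : Finset (ZMod (2*n+1))).erase b) = 2*n := by
      rw [Finset.card_erase_of_mem (mem_univ b), Finset.card_univ, ZMod.card]
      omega
    have h2 := Finset.card_le_card hsubE
    rw [hcard] at h2
    have : #(univ.filter (fun a : ZMod (2*n+1) =>
        (π.symm b - π.symm a).val ∈ Icc 1 n ∧ a.val < b.val)) = Cnt n π b := rfl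
    omega
  -- per-b inner sum evaluation
  have hsum_b : ∀ b : ZMod (2*n+1),
      ∑ a ∈ univ.filter (fun a : ZMod (2*n+1) => (π.symm b - π.symm a).val ∈ Icc 1 n),
        (if a.val < b.val then (1:ℤ) else -1) = 2 * (Cnt n π b : ℤ) - n := by
    intro b
    have hcc := Finset.card_filter_add_card_filter_not
      (s := univ.filter (fun a : ZMod (2*n+1) => (π.symm b - π.symm a).val ∈ Icc 1 n))
      (p := fun a => a.val < b.val)
    simp only [Finset.filter_filter] at hcc
    rw [hA b] at hcc
    rw [Finset.sum_ite, Finset.sum_const, Finset.sum_const]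
    simp only [Finset.filter_filter, nsmul_eq_mul]
    have hfold : #(univ.filter (fun a : ZMod (2*n+1) =>
        (π.symm b - π.symm a).val ∈ Icc 1 n ∧ a.val < b.val)) = Cnt n π b := rfl
    rw [hfold] at hcc ⊢
    omega
  -- inner reindex
  have step1 : ∀ i : ZMod (2*n+1),
      (∑ j ∈ range n, if (π i).val < (π (i + ((j + 1 : ℕ) : ZMod (2 * n + 1)))).val then (1:ℤ) else -1)
    = ∑ k ∈ univ.filter (fun k : ZMod (2*n+1) => (k - i).val ∈ Icc 1 n),
        (if (π i).val < (π k).val then (1:ℤ) else -1) := by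
    intro i
    refine Finset.sum_nbij' (fun j => i + ((j+1 : ℕ) : ZMod (2*n+1))) (fun k => (k - i).val - 1) ?_ ?_ ?_ ?_ ?_
    · intro j hj; rw [mem_range] at hj
      simp only [mem_filter, mem_univ, true_and, add_sub_cancel_left, mem_Icc]
      rw [ZMod.val_cast_of_lt (by omega)]; omega
    · intro k hk; simp only [mem_filter, mem_univ, true_and, mem_Icc] at hk
      show (k - i).val - 1 ∈ range n
      rw [mem_range]; omega
    · intro j hj; rw [mem_range] at hj
      simp only [add_sub_cancel_left]
      rw [ZMod.val_cast_of_lt (by omega)]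
      omega
    · intro k hk; simp only [mem_filter, mem_univ, true_and, mem_Icc] at hk
      rw [show (k - i).val - 1 + 1 = (k - i).val by omega]
      rw [ZMod.natCast_val, ZMod.cast_id]
      ring
    · intro j _; rfl
  -- main rewriting of the writhe
  have key : writheP n π = ∑ b : ZMod (2*n+1), (2 * (Cnt n π b : ℤ) - n) := by
    rw [writheP]
    calc
      (∑ i : ZMod (2*n+1), ∑ j ∈ range n,
          if (π i).val < (π (i + ((j + 1 : ℕ) : ZMod (2 * n + 1)))).val then (1:ℤ) else -1)
        = ∑ i : ZMod (2*n+1), ∑ k ∈ univ.filter (fun k : ZMod (2*n+1) => (k - i).val ∈ Icc 1 n),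
            (if (π i).val < (π k).val then (1:ℤ) else -1) :=
          Finset.sum_congr rfl (fun i _ => step1 i)
      _ = ∑ p ∈ (univ ×ˢ univ).filter
            (fun p : ZMod (2*n+1) × ZMod (2*n+1) => (p.2 - p.1).val ∈ Icc 1 n),
            (if (π p.1).val < (π p.2).val then (1:ℤ) else -1) := by
          rw [Finset.sum_filter (fun p : ZMod (2*n+1) × ZMod (2*n+1) => (p.2 - p.1).val ∈ Icc 1 n),
            Finset.sum_product' (f := fun i k : ZMod (2*n+1) =>
              if (k - i).val ∈ Icc 1 n then if (π i).val < (π k).val then (1:ℤ) else -1 else 0)]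
          exact Finset.sum_congr rfl (fun i _ => Finset.sum_filter _ _)
      _ = ∑ q ∈ (univ ×ˢ univ).filter
            (fun q : ZMod (2*n+1) × ZMod (2*n+1) => (π.symm q.2 - π.symm q.1).val ∈ Icc 1 n),
            (if q.1.val < q.2.val then (1:ℤ) else -1) := by
          refine Finset.sum_nbij' (fun p => (π p.1, π p.2)) (fun q => (π.symm q.1, π.symm q.2)) ?_ ?_ ?_ ?_ ?_
          · intro p hp; rw [mem_filter] at hp ⊢
            refine ⟨mem_product.mpr ⟨mem_univ _, mem_univ _⟩, ?_⟩
            simpa using hp.2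
          · intro q hq; rw [mem_filter] at hq ⊢
            exact ⟨mem_product.mpr ⟨mem_univ _, mem_univ _⟩, hq.2⟩
          · intro p _; simp
          · intro q _; simp
          · intro p _; rfl
      _ = ∑ b : ZMod (2*n+1), ∑ a ∈ univ.filter
            (fun a : ZMod (2*n+1) => (π.symm b - π.symm a).val ∈ Icc 1 n),
            (if a.val < b.val then (1:ℤ) else -1) := by
          rw [Finset.sum_filter (fun q : ZMod (2*n+1) × ZMod (2*n+1) => (π.symm q.2 - π.symm q.1).val ∈ Icc 1 n),
            Finset.sum_product_right' (f := fun a b : ZMod (2*n+1) =>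
              if (π.symm b - π.symm a).val ∈ Icc 1 n then if a.val < b.val then (1:ℤ) else -1 else 0)]
          exact Finset.sum_congr rfl (fun b _ => (Finset.sum_filter _ _).symm)
      _ = ∑ b : ZMod (2*n+1), (2 * (Cnt n π b : ℤ) - n) :=
          Finset.sum_congr rfl (fun b _ => hsum_b b)
  -- final bounds
  have upper : writheP n π ≤ (n:ℤ)^2 := by
    rw [key]
    calc
      ∑ b : ZMod (2*n+1), (2 * (Cnt n π b : ℤ) - n)
        ≤ ∑ b : ZMod (2*n+1), (2 * min ((b.val : ℤ)) (n:ℤ) - n) := by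
          refine Finset.sum_le_sum (fun b _ => ?_)
          have h1 := hC1 b
          have h2 := hC2 b
          have hmin : (Cnt n π b : ℤ) ≤ min ((b.val : ℤ)) (n:ℤ) :=
            le_min (by exact_mod_cast h2) (by exact_mod_cast h1)
          linarith
      _ = ∑ v ∈ range (2*n+1), (2 * min ((v : ℤ)) (n:ℤ) - n) :=
          sum_valZ (fun v => 2 * min ((v : ℤ)) (n:ℤ) - n)
      _ = (n:ℤ)^2 := by
          rw [Finset.sum_sub_distrib, ← Finset.mul_sum, Finset.sum_const, card_range, nsmul_eq_mul]
          have h := two_T n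
          push_cast
          linear_combination h
  have lower : -(n:ℤ)^2 ≤ writheP n π := by
    rw [key]
    have hstep : ∀ b : ZMod (2*n+1),
        2 * max ((b.val : ℤ)) (n:ℤ) - 3*n ≤ 2 * (Cnt n π b : ℤ) - n := by
      intro b
      have h3 := hC3 b
      have hmax : max (b.val) n ≤ Cnt n π b + n := max_le (by omega) (by omega)
      have hmax' : max ((b.val : ℤ)) (n:ℤ) ≤ (Cnt n π b : ℤ) + n := by
        have := (Nat.cast_le (α := ℤ)).mpr hmax
        push_cast at this
        exact this
      linarith
    calc
      -(n:ℤ)^2 = ∑ v ∈ range (2*n+1), (2 * max ((v : ℤ)) (n:ℤ) - 3*n) := by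
          rw [Finset.sum_sub_distrib, ← Finset.mul_sum, Finset.sum_const, card_range, nsmul_eq_mul]
          have h := two_M n
          push_cast
          linear_combination -h
      _ = ∑ b : ZMod (2*n+1), (2 * max ((b.val : ℤ)) (n:ℤ) - 3*n) :=
          (sum_valZ (fun v => 2 * max ((v : ℤ)) (n:ℤ) - 3*n)).symm
      _ ≤ ∑ b : ZMod (2*n+1), (2 * (Cnt n π b : ℤ) - n) :=
          Finset.sum_le_sum (fun b _ => hstep b)
  rw [abs_le]
  exact ⟨lower, upper⟩
end

section
/- For every π ∈ S_{2n+1} and every x ∈ Z_{2n+1}, |w_x(π)| ≤ min(π(x), 2n − π(x)), where w_x(π) = Σ_{y : π(y) > π(x)} (+1 if y ∈ {x+1,…,x+n}, −1 if y ∈ {x−n,…,x−1}); moreover w(π) = Σ_{x=0}^{2n} w_x(π). -/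
/-- The local writhe at `x`:
`w_x(π) = ∑_{y : π(y) > π(x)} (+1 if y ∈ {x+1,…,x+n}, −1 if y ∈ {x−n,…,x−1})`. -/
def localWrithe (n : ℕ) (π : ZMod (2 * n + 1) → ZMod (2 * n + 1))
    (x : ZMod (2 * n + 1)) : ℤ :=
  ∑ j ∈ Finset.range n,
    ((if (π x).val < (π (x + ((j + 1 : ℕ) : ZMod (2 * n + 1)))).val then (1 : ℤ) else 0)
      - (if (π x).val < (π (x - ((j + 1 : ℕ) : ZMod (2 * n + 1)))).val then (1 : ℤ) else 0))

lemma zmod_sum_range {m : ℕ} [NeZero m] (G : ZMod m → ℤ) :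
    ∑ y : ZMod m, G y = ∑ k ∈ Finset.range m, G (k : ℕ) := by
  refine Finset.sum_nbij' (fun y => ZMod.val y) (fun k => ((k : ℕ) : ZMod m)) ?_ ?_ ?_ ?_ ?_
  · intro a _; exact Finset.mem_range.mpr (ZMod.val_lt a)
  · intro a _; exact Finset.mem_univ _
  · intro a _; exact ZMod.natCast_zmod_val a
  · intro a ha; exact ZMod.val_natCast_of_lt (Finset.mem_range.mp ha)
  · intro a _; rw [ZMod.natCast_zmod_val]

lemma sum_ite_range (v : ℕ) : ∀ m : ℕ, v < m →
    ∑ k ∈ Finset.range m, (if v < k then (1:ℤ) else 0) = (m : ℤ) - 1 - v := by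
  intro m
  induction m with
  | zero => omega
  | succ m ih =>
    intro hv
    rw [Finset.sum_range_succ]
    rcases Nat.lt_or_ge v m with h | h
    · rw [ih h, if_pos h]; push_cast; ring
    · have : ∑ k ∈ Finset.range m, (if v < k then (1:ℤ) else 0) = 0 := by
        apply Finset.sum_eq_zero
        intro k hk
        have := Finset.mem_range.mp hk
        rw [if_neg (by omega)]
      rw [this, if_neg (by omega)]
      push_cast; omega

/-- Key counting lemma: the number of `y ≠ x` with `π y > π x` is `2n - π x`. -/
lemma count_lemma (n : ℕ) (π : Equiv.Perm (ZMod (2 * n + 1))) (x : ZMod (2 * n + 1)) :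
    ∑ j ∈ Finset.range n,
      ((if (π x).val < (π (x + ((j + 1 : ℕ) : ZMod (2 * n + 1)))).val then (1 : ℤ) else 0)
        + (if (π x).val < (π (x - ((j + 1 : ℕ) : ZMod (2 * n + 1)))).val then (1 : ℤ) else 0))
    = 2 * n - (π x).val := by
  set F : ZMod (2 * n + 1) → ℤ := fun y => if (π x).val < (π y).val then 1 else 0 with hF
  have hB : ∑ y : ZMod (2 * n + 1), F y = 2 * n - (π x).val := by
    have h1 : ∑ y : ZMod (2 * n + 1), F y
        = ∑ z : ZMod (2 * n + 1), (if (π x).val < z.val then (1:ℤ) else 0) :=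
      Equiv.sum_comp π (fun z => if (π x).val < z.val then (1:ℤ) else 0)
    rw [h1, zmod_sum_range (fun z => if (π x).val < z.val then (1:ℤ) else 0)]
    have h2 : ∀ k ∈ Finset.range (2 * n + 1),
        (if (π x).val < ((k : ZMod (2 * n + 1))).val then (1:ℤ) else 0)
        = (if (π x).val < k then (1:ℤ) else 0) := by
      intro k hk
      rw [ZMod.val_natCast_of_lt (Finset.mem_range.mp hk)]
    rw [Finset.sum_congr rfl h2, sum_ite_range _ (2 * n + 1) (ZMod.val_lt (π x))]
    push_cast; ring
  have hA : ∑ y : ZMod (2 * n + 1), F y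
      = F x + ∑ j ∈ Finset.range n,
          (F (x + ((j + 1 : ℕ) : ZMod (2 * n + 1))) + F (x - ((j + 1 : ℕ) : ZMod (2 * n + 1)))) := by
    have h1 : ∑ y : ZMod (2 * n + 1), F y = ∑ y : ZMod (2 * n + 1), F (x + y) :=
      (Equiv.sum_comp (Equiv.addLeft x) F).symm
    rw [h1, zmod_sum_range (fun y => F (x + y))]
    have h2 : ∑ k ∈ Finset.range (2 * n + 1), F (x + (k : ℕ))
        = (∑ i ∈ Finset.range (2 * n), F (x + ((i + 1 : ℕ) : ZMod (2 * n + 1))))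
          + F (x + ((0:ℕ) : ZMod (2 * n + 1))) :=
      Finset.sum_range_succ' (fun k => F (x + ((k : ℕ) : ZMod (2 * n + 1)))) (2 * n)
    rw [h2]
    have h3 : F (x + ((0:ℕ) : ZMod (2 * n + 1))) = F x := by norm_num
    rw [h3, add_comm]
    congr 1
    have h4 : ∑ i ∈ Finset.range (2 * n), F (x + ((i + 1 : ℕ) : ZMod (2 * n + 1)))
        = ∑ i ∈ Finset.range n, F (x + ((i + 1 : ℕ) : ZMod (2 * n + 1)))
          + ∑ i ∈ Finset.Ico n (2 * n), F (x + ((i + 1 : ℕ) : ZMod (2 * n + 1))) := by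
      rw [Finset.range_eq_Ico, ← Finset.sum_Ico_consecutive _ (Nat.zero_le n) (by omega),
        ← Finset.range_eq_Ico]
    rw [h4, Finset.sum_add_distrib]
    congr 1
    rw [Finset.sum_Ico_eq_sum_range]
    have h5 : (2 * n - n) = n := by omega
    rw [h5]
    rw [← Finset.sum_range_reflect (fun j => F (x - ((j + 1 : ℕ) : ZMod (2 * n + 1)))) n]
    apply Finset.sum_congr rfl
    intro j hj
    have hjn : j < n := Finset.mem_range.mp hj
    have h6 : n - 1 - j + 1 = n - j := by omega
    rw [h6]
    congr 1
    have h7 : ((n + j + 1 : ℕ) : ZMod (2 * n + 1)) = -((n - j : ℕ) : ZMod (2 * n + 1)) := by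
      have h : ((n + j + 1 : ℕ) : ZMod (2 * n + 1)) + ((n - j : ℕ) : ZMod (2 * n + 1)) = 0 := by
        rw [← Nat.cast_add]
        have he : n + j + 1 + (n - j) = 2 * n + 1 := by omega
        rw [he, ZMod.natCast_self]
      linear_combination h
    show x + ((n + j + 1 : ℕ) : ZMod (2 * n + 1)) = x - ((n - j : ℕ) : ZMod (2 * n + 1))
    rw [h7, ← sub_eq_add_neg]
  have hFx : F x = 0 := by simp [hF]
  rw [hFx, zero_add] at hA
  rw [← hA, hB]


lemma writhe_eq_sum (n : ℕ) (π : Equiv.Perm (ZMod (2 * n + 1))) :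
    writheP n π = ∑ x : ZMod (2 * n + 1), localWrithe n π x := by
  simp only [writheP, localWrithe]
  rw [Finset.sum_congr rfl (fun x _ => Finset.sum_sub_distrib _ _), Finset.sum_sub_distrib]
  have key : ∀ j ∈ Finset.range n,
      ∑ x : ZMod (2 * n + 1),
        (if (π x).val < (π (x - ((j + 1 : ℕ) : ZMod (2 * n + 1)))).val then (1:ℤ) else 0)
      = ∑ x : ZMod (2 * n + 1),
        (if (π (x + ((j + 1 : ℕ) : ZMod (2 * n + 1)))).val < (π x).val then (1:ℤ) else 0) := by
    intro j _
    rw [← Equiv.sum_comp (Equiv.addRight ((j + 1 : ℕ) : ZMod (2 * n + 1)))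
      (fun x => if (π x).val < (π (x - ((j + 1 : ℕ) : ZMod (2 * n + 1)))).val then (1:ℤ) else 0)]
    apply Finset.sum_congr rfl
    intro y _
    simp only [Equiv.coe_addRight, add_sub_cancel_right]
  have h2 : (∑ x : ZMod (2 * n + 1), ∑ j ∈ Finset.range n,
        (if (π x).val < (π (x - ((j + 1 : ℕ) : ZMod (2 * n + 1)))).val then (1:ℤ) else 0))
      = ∑ x : ZMod (2 * n + 1), ∑ j ∈ Finset.range n,
        (if (π (x + ((j + 1 : ℕ) : ZMod (2 * n + 1)))).val < (π x).val then (1:ℤ) else 0) := by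
    rw [Finset.sum_comm, Finset.sum_congr rfl key, Finset.sum_comm]
  rw [h2, ← Finset.sum_sub_distrib]
  refine Finset.sum_congr rfl fun x _ => ?_
  rw [← Finset.sum_sub_distrib]
  refine Finset.sum_congr rfl fun j hj => ?_
  have hjn : j < n := Finset.mem_range.mp hj
  have hc : ((j + 1 : ℕ) : ZMod (2 * n + 1)) ≠ 0 := by
    intro h
    have hv := ZMod.val_natCast_of_lt (show j + 1 < 2 * n + 1 by omega)
    rw [h] at hv
    simp [ZMod.val_zero] at hv
  have hx : x + ((j + 1 : ℕ) : ZMod (2 * n + 1)) ≠ x := by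
    intro h
    apply hc
    linear_combination h
  have hne : (π (x + ((j + 1 : ℕ) : ZMod (2 * n + 1)))).val ≠ (π x).val :=
    fun h => hx (π.injective (ZMod.val_injective _ h))
  split_ifs <;> omega

/-- `|w_x(π)| ≤ min(π(x), 2n − π(x))` for every `x`, and `w(π) = ∑_x w_x(π)`. -/
theorem localWrithe_bound_and_sum (n : ℕ) (π : Equiv.Perm (ZMod (2 * n + 1))) :
    (∀ x : ZMod (2 * n + 1),
      |localWrithe n π x| ≤ (min ((π x).val) (2 * n - (π x).val) : ℤ)) ∧
    writheP n π = ∑ x : ZMod (2 * n + 1), localWrithe n π x := by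
  refine ⟨fun x => ?_, writhe_eq_sum n π⟩
  set a := ∑ j ∈ Finset.range n,
    (if (π x).val < (π (x + ((j + 1 : ℕ) : ZMod (2 * n + 1)))).val then (1:ℤ) else 0) with ha
  set b := ∑ j ∈ Finset.range n,
    (if (π x).val < (π (x - ((j + 1 : ℕ) : ZMod (2 * n + 1)))).val then (1:ℤ) else 0) with hb
  have hab : a + b = 2 * n - (π x).val := by
    rw [ha, hb, ← Finset.sum_add_distrib]
    exact count_lemma n π x
  have ha0 : 0 ≤ a := Finset.sum_nonneg fun j _ => by split <;> norm_num
  have hb0 : 0 ≤ b := Finset.sum_nonneg fun j _ => by split <;> norm_num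
  have han : a ≤ n := by
    rw [ha]
    calc _ ≤ ∑ _j ∈ Finset.range n, (1:ℤ) :=
          Finset.sum_le_sum fun j _ => by split <;> norm_num
      _ = n := by simp
  have hbn : b ≤ n := by
    rw [hb]
    calc _ ≤ ∑ _j ∈ Finset.range n, (1:ℤ) :=
          Finset.sum_le_sum fun j _ => by split <;> norm_num
      _ = n := by simp
  have hloc : localWrithe n π x = a - b := by
    rw [localWrithe, Finset.sum_sub_distrib]
  have hv : ((π x).val : ℤ) ≤ 2 * n := by
    have := ZMod.val_lt (π x); omega
  rw [hloc]
  refine le_min (abs_le.mpr ⟨by omega, by omega⟩) (abs_le.mpr ⟨by omega, by omega⟩)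
end

section
/- For every π ∈ S_{2n+1} and every adjacent circular transposition τ_x = (x, x+1) with x ∈ Z_{2n+1}, the writhe changes by exactly ±2: w(π∘τ_x) − w(π) ∈ {−2, +2}. -/
namespace WritheAux

variable {n : ℕ}

/-- The set of "canonically oriented" pairs at circular distance `1..n`. -/
def S (n : ℕ) : Finset (ZMod (2 * n + 1) × ZMod (2 * n + 1)) :=
  Finset.univ.filter fun p => 1 ≤ (p.2 - p.1).val ∧ (p.2 - p.1).val ≤ n

def sgn (n : ℕ) (f : ZMod (2 * n + 1) → ZMod (2 * n + 1))
    (p : ZMod (2 * n + 1) × ZMod (2 * n + 1)) : ℤ :=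
  if (f p.1).val < (f p.2).val then 1 else -1

lemma mem_S {p : ZMod (2 * n + 1) × ZMod (2 * n + 1)} :
    p ∈ S n ↔ 1 ≤ (p.2 - p.1).val ∧ (p.2 - p.1).val ≤ n := by
  simp [S]

lemma val_sub' (a b : ZMod (2 * n + 1)) :
    (a - b).val = (a.val + (2 * n + 1 - b.val)) % (2 * n + 1) := by
  have hb : b.val < 2 * n + 1 := ZMod.val_lt b
  have ha : a.val < 2 * n + 1 := ZMod.val_lt a
  rw [sub_eq_add_neg, ZMod.val_add, ZMod.neg_val]
  split_ifs with h
  · subst h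
    rw [ZMod.val_zero, Nat.sub_zero, add_zero, Nat.add_mod_right, Nat.mod_eq_of_lt ha]
  · rfl

lemma mod_cases {N a : ℕ} (hN : 0 < N) (h : a < 2 * N) :
    (a < N ∧ a % N = a) ∨ (N ≤ a ∧ a % N = a - N) := by
  rcases lt_or_ge a N with h' | h'
  · exact Or.inl ⟨h', Nat.mod_eq_of_lt h'⟩
  · refine Or.inr ⟨h', ?_⟩
    rw [Nat.mod_eq_sub_mod h', Nat.mod_eq_of_lt (by omega)]

lemma writheP_eq (f : ZMod (2 * n + 1) → ZMod (2 * n + 1)) :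
    writheP n f = ∑ p ∈ S n, sgn n f p := by
  rw [writheP, ← Finset.sum_product']
  refine Finset.sum_nbij' (fun q => (q.1, q.1 + ((q.2 + 1 : ℕ) : ZMod (2 * n + 1))))
    (fun p => (p.1, (p.2 - p.1).val - 1)) ?_ ?_ ?_ ?_ ?_
  · rintro ⟨i, j⟩ hq
    simp only [Finset.mem_product, Finset.mem_univ, Finset.mem_range, true_and] at hq
    rw [mem_S]
    simp only [add_sub_cancel_left]
    rw [ZMod.val_natCast, Nat.mod_eq_of_lt (by omega)]
    omega
  · rintro ⟨a, b⟩ hp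
    dsimp only
    rw [mem_S] at hp
    dsimp only at hp
    simp only [Finset.mem_product, Finset.mem_univ, Finset.mem_range, true_and]
    omega
  · rintro ⟨i, j⟩ hq
    simp only [Finset.mem_product, Finset.mem_univ, Finset.mem_range, true_and] at hq
    simp only [add_sub_cancel_left, Prod.mk.injEq, true_and]
    rw [ZMod.val_natCast, Nat.mod_eq_of_lt (by omega)]
    omega
  · rintro ⟨a, b⟩ hp
    dsimp only
    rw [mem_S] at hp
    dsimp only at hp
    simp only [Prod.mk.injEq, true_and]
    rw [Nat.sub_add_cancel hp.1]
    rw [ZMod.natCast_val, ZMod.cast_id]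
    exact add_sub_cancel a b
  · rintro ⟨i, j⟩ _
    rfl

/-- The key combinatorial characterization: a pair is in `S` but its swap-image is not,
iff it is one of three explicit pairs. -/
lemma key (hn : 1 ≤ n) (x : ZMod (2 * n + 1)) (p : ZMod (2 * n + 1) × ZMod (2 * n + 1)) :
    (p ∈ S n ∧ (Equiv.swap x (x + 1) p.1, Equiv.swap x (x + 1) p.2) ∉ S n) ↔
      (p = (x, x + 1) ∨ p = (x + ((n + 1 : ℕ) : ZMod (2 * n + 1)), x)
        ∨ p = (x + 1, x + ((n + 1 : ℕ) : ZMod (2 * n + 1)))) := by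
  obtain ⟨a, b⟩ := p
  dsimp only
  have hN : (3 : ℕ) ≤ 2 * n + 1 := by omega
  -- basic cast facts
  have cast_inj : ∀ w w' : ℕ, w < 2 * n + 1 → w' < 2 * n + 1 →
      (((w : ℕ) : ZMod (2 * n + 1)) = ((w' : ℕ) : ZMod (2 * n + 1)) ↔ w = w') := by
    intro w w' hw hw'
    constructor
    · intro h
      have := congrArg ZMod.val h
      rwa [ZMod.val_natCast, ZMod.val_natCast, Nat.mod_eq_of_lt hw, Nat.mod_eq_of_lt hw'] at this
    · rintro rfl; rfl
  have eqx_iff : ∀ w w' : ℕ, w < 2 * n + 1 → w' < 2 * n + 1 →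
      (x + ((w : ℕ) : ZMod (2 * n + 1)) = x + ((w' : ℕ) : ZMod (2 * n + 1)) ↔ w = w') := by
    intro w w' hw hw'
    rw [add_right_inj]
    exact cast_inj w w' hw hw'
  obtain ⟨u, hu, rfl⟩ : ∃ u : ℕ, u < 2 * n + 1 ∧ a = x + (u : ZMod (2 * n + 1)) := by
    refine ⟨(a - x).val, ZMod.val_lt _, ?_⟩
    rw [ZMod.natCast_val, ZMod.cast_id, add_sub_cancel]
  obtain ⟨v, hv, rfl⟩ : ∃ v : ℕ, v < 2 * n + 1 ∧ b = x + (v : ZMod (2 * n + 1)) := by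
    refine ⟨(b - x).val, ZMod.val_lt _, ?_⟩
    rw [ZMod.natCast_val, ZMod.cast_id, add_sub_cancel]
  -- value of the difference
  have hd : ∀ w w' : ℕ, w < 2 * n + 1 → w' < 2 * n + 1 →
      ((x + ((w' : ℕ) : ZMod (2 * n + 1))) - (x + ((w : ℕ) : ZMod (2 * n + 1)))).val
        = (w' + (2 * n + 1 - w)) % (2 * n + 1) := by
    intro w w' hw hw'
    have h1 : (x + ((w' : ℕ) : ZMod (2 * n + 1))) - (x + ((w : ℕ) : ZMod (2 * n + 1)))
        = ((w' : ℕ) : ZMod (2 * n + 1)) - ((w : ℕ) : ZMod (2 * n + 1)) := by ring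
    rw [h1, val_sub', ZMod.val_natCast, ZMod.val_natCast,
      Nat.mod_eq_of_lt hw, Nat.mod_eq_of_lt hw']
  -- swap action on x + w
  have hswap : ∀ w : ℕ, w < 2 * n + 1 →
      Equiv.swap x (x + 1) (x + ((w : ℕ) : ZMod (2 * n + 1)))
        = x + (((if w = 0 then 1 else if w = 1 then 0 else w) : ℕ) : ZMod (2 * n + 1)) := by
    intro w hw
    split_ifs with h0 h1
    · subst h0
      simp only [Nat.cast_zero, add_zero, Nat.cast_one]
      exact Equiv.swap_apply_left x (x + 1)
    · subst h1
      simp only [Nat.cast_one, Nat.cast_zero, add_zero]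
      exact Equiv.swap_apply_right x (x + 1)
    · refine Equiv.swap_apply_of_ne_of_ne ?_ ?_
      · intro hh
        exact h0 ((eqx_iff w 0 hw (by omega)).mp (by simpa using hh))
      · intro hh
        exact h1 ((eqx_iff w 1 hw (by omega)).mp (by simpa using hh))
  obtain ⟨u', hu'eq, hu', hu''⟩ :
      ∃ w : ℕ, (if u = 0 then 1 else if u = 1 then 0 else u) = w ∧ w < 2 * n + 1 ∧
        ((u = 0 ∧ w = 1) ∨ (u = 1 ∧ w = 0) ∨ (u ≠ 0 ∧ u ≠ 1 ∧ w = u)) := by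
    refine ⟨if u = 0 then 1 else if u = 1 then 0 else u, rfl, ?_, ?_⟩ <;>
      split_ifs with h0 h1
    · omega
    · omega
    · omega
    · exact Or.inl ⟨h0, rfl⟩
    · exact Or.inr (Or.inl ⟨h1, rfl⟩)
    · exact Or.inr (Or.inr ⟨h0, h1, rfl⟩)
  obtain ⟨v', hv'eq, hv', hv''⟩ :
      ∃ w : ℕ, (if v = 0 then 1 else if v = 1 then 0 else v) = w ∧ w < 2 * n + 1 ∧
        ((v = 0 ∧ w = 1) ∨ (v = 1 ∧ w = 0) ∨ (v ≠ 0 ∧ v ≠ 1 ∧ w = v)) := by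
    refine ⟨if v = 0 then 1 else if v = 1 then 0 else v, rfl, ?_, ?_⟩ <;>
      split_ifs with h0 h1
    · omega
    · omega
    · omega
    · exact Or.inl ⟨h0, rfl⟩
    · exact Or.inr (Or.inl ⟨h1, rfl⟩)
    · exact Or.inr (Or.inr ⟨h0, h1, rfl⟩)
  rw [mem_S, mem_S]
  dsimp only
  simp only [hswap u hu, hswap v hv]
  rw [hu'eq, hv'eq]
  rw [hd u v hu hv, hd u' v' hu' hv']
  -- rewrite the RHS equalities
  have r1 : ((x + ((u : ℕ) : ZMod (2 * n + 1)), x + ((v : ℕ) : ZMod (2 * n + 1)))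
      = (x, x + 1)) ↔ (u = 0 ∧ v = 1) := by
    rw [Prod.mk.injEq]
    constructor
    · rintro ⟨h1, h2⟩
      exact ⟨(eqx_iff u 0 hu (by omega)).mp (by simpa using h1),
        (eqx_iff v 1 hv (by omega)).mp (by simpa using h2)⟩
    · rintro ⟨rfl, rfl⟩
      simp
  have r2 : ((x + ((u : ℕ) : ZMod (2 * n + 1)), x + ((v : ℕ) : ZMod (2 * n + 1)))
      = (x + ((n + 1 : ℕ) : ZMod (2 * n + 1)), x)) ↔ (u = n + 1 ∧ v = 0) := by
    rw [Prod.mk.injEq]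
    constructor
    · rintro ⟨h1, h2⟩
      exact ⟨(eqx_iff u (n + 1) hu (by omega)).mp h1,
        (eqx_iff v 0 hv (by omega)).mp (by simpa using h2)⟩
    · rintro ⟨rfl, rfl⟩
      simp
  have r3 : ((x + ((u : ℕ) : ZMod (2 * n + 1)), x + ((v : ℕ) : ZMod (2 * n + 1)))
      = (x + 1, x + ((n + 1 : ℕ) : ZMod (2 * n + 1)))) ↔ (u = 1 ∧ v = n + 1) := by
    rw [Prod.mk.injEq]
    constructor
    · rintro ⟨h1, h2⟩
      exact ⟨(eqx_iff u 1 hu (by omega)).mp (by simpa using h1),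
        (eqx_iff v (n + 1) hv (by omega)).mp h2⟩
    · rintro ⟨rfl, rfl⟩
      simp
  rw [r1, r2, r3]
  -- now pure arithmetic
  have m1 := mod_cases (N := 2 * n + 1) (a := v + (2 * n + 1 - u)) (by omega) (by omega)
  have m2 := mod_cases (N := 2 * n + 1) (a := v' + (2 * n + 1 - u')) (by omega) (by omega)
  generalize hR1 : (v + (2 * n + 1 - u)) % (2 * n + 1) = R1 at m1 ⊢
  generalize hR2 : (v' + (2 * n + 1 - u')) % (2 * n + 1) = R2 at m2 ⊢
  clear hR1 hR2 cast_inj eqx_iff hd hswap r1 r2 r3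
  omega

end WritheAux

open WritheAux in
/-- Composing with an adjacent circular transposition `τ_x = (x, x+1)` changes the
writhe by exactly `±2`. -/
theorem writhe_swap_step (n : ℕ) (hn : 1 ≤ n) (π : Equiv.Perm (ZMod (2 * n + 1)))
    (x : ZMod (2 * n + 1)) :
    writheP n (π ∘ Equiv.swap x (x + 1)) - writheP n π = 2 ∨
    writheP n (π ∘ Equiv.swap x (x + 1)) - writheP n π = -2 := by
  classical
  set c : ZMod (2 * n + 1) := x + ((n + 1 : ℕ) : ZMod (2 * n + 1)) with hc
  -- distinctness of x, x+1, c
  have hone : ((1 : ℕ) : ZMod (2 * n + 1)).val = 1 := by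
    rw [ZMod.val_natCast, Nat.mod_eq_of_lt (by omega)]
  have hx1 : x ≠ x + 1 := by
    intro h
    have : (x + 1) - x = 0 := by rw [← h]; ring
    rw [add_sub_cancel_left] at this
    have := congrArg ZMod.val this
    rw [ZMod.val_zero] at this
    rw [show (1 : ZMod (2*n+1)) = ((1:ℕ) : ZMod (2*n+1)) by simp] at this
    rw [hone] at this
    omega
  have hvn1 : ((n + 1 : ℕ) : ZMod (2 * n + 1)).val = n + 1 := by
    rw [ZMod.val_natCast, Nat.mod_eq_of_lt (by omega)]
  have hxc : x ≠ c := by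
    intro h
    have : ((n + 1 : ℕ) : ZMod (2 * n + 1)) = 0 := by
      have := congrArg (· - x) h
      simpa [hc] using this.symm
    have := congrArg ZMod.val this
    rw [hvn1, ZMod.val_zero] at this
    omega
  have h1c : x + 1 ≠ c := by
    intro h
    have : ((n + 1 : ℕ) : ZMod (2 * n + 1)) = 1 := by
      have := congrArg (· - x) h
      simpa [hc] using this.symm
    have := congrArg ZMod.val this
    rw [hvn1, show (1 : ZMod (2*n+1)) = ((1:ℕ) : ZMod (2*n+1)) by simp, hone] at this
    omega
  set e : (ZMod (2 * n + 1) × ZMod (2 * n + 1)) ≃ (ZMod (2 * n + 1) × ZMod (2 * n + 1)) :=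
    (Equiv.swap x (x + 1)).prodCongr (Equiv.swap x (x + 1)) with he
  have he_apply : ∀ p : ZMod (2 * n + 1) × ZMod (2 * n + 1),
      e p = (Equiv.swap x (x + 1) p.1, Equiv.swap x (x + 1) p.2) := by
    intro p; rfl
  have he_symm : e.symm = e := by
    rw [he, Equiv.prodCongr_symm, Equiv.symm_swap]
  have he_invol : ∀ p, e (e p) = p := by
    intro p
    rw [he_apply, he_apply]
    simp [Equiv.swap_apply_self]
  rw [writheP_eq, writheP_eq]
  have h1 : ∑ p ∈ S n, sgn n (π ∘ Equiv.swap x (x + 1)) p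
      = ∑ p ∈ (S n).map e.toEmbedding, sgn n π p := by
    rw [Finset.sum_map]
    refine Finset.sum_congr rfl fun p _ => ?_
    simp only [sgn, Function.comp_apply, Equiv.coe_toEmbedding, he_apply]
  rw [h1]
  set A := (S n).map e.toEmbedding with hA
  have hmemA : ∀ q, q ∈ A ↔ e q ∈ S n := by
    intro q
    rw [hA, Finset.mem_map_equiv, he_symm]
  -- the two difference sets
  have hST : S n \ A = {(x, x + 1), (c, x), (x + 1, c)} := by
    ext q
    rw [Finset.mem_sdiff, hmemA, he_apply]
    rw [key hn x q, ← hc]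
    simp
  have hTS : A \ S n = {(x + 1, x), (c, x + 1), (x, c)} := by
    ext q
    rw [Finset.mem_sdiff, hmemA]
    have hq : q ∉ S n ↔ (Equiv.swap x (x+1) (e q).1, Equiv.swap x (x+1) (e q).2) ∉ S n := by
      rw [← he_apply, he_invol]
    rw [hq, key hn x (e q), ← hc]
    have hqe : ∀ r : ZMod (2 * n + 1) × ZMod (2 * n + 1), e q = r ↔ q = e r := by
      intro r
      constructor
      · rintro rfl; rw [he_invol]
      · rintro rfl; rw [he_invol]
    rw [hqe, hqe, hqe]
    have e1 : e (x, x + 1) = (x + 1, x) := by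
      rw [he_apply]
      simp [Equiv.swap_apply_left, Equiv.swap_apply_right]
    have e2 : e (c, x) = (c, x + 1) := by
      rw [he_apply]
      simp [Equiv.swap_apply_left, Equiv.swap_apply_of_ne_of_ne hxc.symm h1c.symm]
    have e3 : e (x + 1, c) = (x, c) := by
      rw [he_apply]
      simp [Equiv.swap_apply_right, Equiv.swap_apply_of_ne_of_ne hxc.symm h1c.symm]
    rw [e1, e2, e3]
    simp
  -- split the sums
  have hAsum : ∑ p ∈ A, sgn n π p
      = ∑ p ∈ A ∩ S n, sgn n π p + ∑ p ∈ A \ S n, sgn n π p :=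
    (Finset.sum_inter_add_sum_sdiff A (S n) _).symm
  have hSsum : ∑ p ∈ S n, sgn n π p
      = ∑ p ∈ S n ∩ A, sgn n π p + ∑ p ∈ S n \ A, sgn n π p :=
    (Finset.sum_inter_add_sum_sdiff (S n) A _).symm
  have hinter : A ∩ S n = S n ∩ A := Finset.inter_comm _ _
  -- evaluate the triple sums
  have hd1 : ((x + 1, x) : ZMod (2*n+1) × ZMod (2*n+1)) ≠ (c, x + 1) := by
    intro h; exact h1c (congrArg Prod.fst h)
  have hd2 : ((x + 1, x) : ZMod (2*n+1) × ZMod (2*n+1)) ≠ (x, c) := by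
    intro h; exact hx1 (congrArg Prod.fst h).symm
  have hd3 : ((c, x + 1) : ZMod (2*n+1) × ZMod (2*n+1)) ≠ (x, c) := by
    intro h; exact hxc (congrArg Prod.fst h).symm
  have hd4 : ((x, x + 1) : ZMod (2*n+1) × ZMod (2*n+1)) ≠ (c, x) := by
    intro h; exact hxc (congrArg Prod.fst h)
  have hd5 : ((x, x + 1) : ZMod (2*n+1) × ZMod (2*n+1)) ≠ (x + 1, c) := by
    intro h; exact hx1 (congrArg Prod.fst h)
  have hd6 : ((c, x) : ZMod (2*n+1) × ZMod (2*n+1)) ≠ (x + 1, c) := by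
    intro h; exact h1c (congrArg Prod.fst h).symm
  have sum1 : ∑ p ∈ ({(x + 1, x), (c, x + 1), (x, c)} :
      Finset (ZMod (2*n+1) × ZMod (2*n+1))), sgn n π p
      = sgn n π (x + 1, x) + sgn n π (c, x + 1) + sgn n π (x, c) := by
    rw [Finset.sum_insert (by simp [hd1, hd2]), Finset.sum_insert (by simp [hd3]),
      Finset.sum_singleton]
    ring
  have sum2 : ∑ p ∈ ({(x, x + 1), (c, x), (x + 1, c)} :
      Finset (ZMod (2*n+1) × ZMod (2*n+1))), sgn n π p
      = sgn n π (x, x + 1) + sgn n π (c, x) + sgn n π (x + 1, c) := by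
    rw [Finset.sum_insert (by simp [hd4, hd5]), Finset.sum_insert (by simp [hd6]),
      Finset.sum_singleton]
    ring
  rw [hAsum, hSsum, hinter, hTS, hST, sum1, sum2]
  -- final arithmetic
  have hvne : ∀ z w : ZMod (2 * n + 1), z ≠ w → (π z).val ≠ (π w).val := by
    intro z w hzw hval
    exact hzw (π.injective (ZMod.val_injective _ hval))
  have nab := hvne x (x + 1) hx1
  have nac := hvne x c hxc
  have nbc := hvne (x + 1) c h1c
  simp only [sgn]
  split_ifs <;> omega
end

section
/- Sorting the permutation π(x) = N − 1 − x of Z_N (N odd, N = 2n+1) to the identity using adjacent circular transpositions requires at least n² = (N−1)²/4 transpositions. -/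
open Finset

/-- The reversal permutation `x ↦ N − 1 − x = −1 − x` of `ZMod N`. -/
def revPerm (N : ℕ) : Equiv.Perm (ZMod N) where
  toFun x := -1 - x
  invFun x := -1 - x
  left_inv x := by ring
  right_inv x := by ring

variable (n : ℕ)

def chi (z : ZMod (2*n+1)) : ℤ := if z.val = 0 then 0 else if z.val ≤ n then 1 else -1

def Wt (i j : ZMod (2*n+1)) : ℤ := if i.val < j.val then 1 else if j.val < i.val then -1 else 0

def Phi (σ : Equiv.Perm (ZMod (2*n+1))) : ℤ := ∑ i, ∑ j, Wt n i j * chi n (σ j - σ i)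

lemma val_transfer (F : ℕ → ℤ) :
    ∑ z : ZMod (2*n+1), F z.val = ∑ k ∈ Finset.range (2*n+1), F k := by
  refine Finset.sum_nbij' (fun z => z.val) (fun k => (k : ZMod (2*n+1))) ?_ ?_ ?_ ?_ ?_
  · intro a _; exact Finset.mem_range.mpr a.val_lt
  · intro a _; exact Finset.mem_univ _
  · intro a _; exact ZMod.natCast_rightInverse a
  · intro a ha; exact ZMod.val_cast_of_lt (Finset.mem_range.mp ha)
  · intro a _; rfl

lemma chi_neg (z : ZMod (2*n+1)) (hn : 0 < n) : chi n (-z) = - chi n z := by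
  unfold chi
  rcases eq_or_ne z 0 with rfl | hz
  · simp
  · have h1 : z.val ≠ 0 := fun h => hz (ZMod.val_injective _ (by simpa using h))
    have h2 : (-z).val = 2*n+1 - z.val := by rw [ZMod.neg_val]; simp [hz]
    have h3 : z.val < 2*n+1 := z.val_lt
    rw [h2]
    split_ifs <;> omega

lemma chi_sum_zero (hn : 0 < n) : ∑ z : ZMod (2*n+1), chi n z = 0 := by
  have : ∀ z : ZMod (2*n+1), chi n z = (fun k : ℕ => if k = 0 then (0:ℤ) else if k ≤ n then 1 else -1) z.val := fun z => rfl
  rw [Finset.sum_congr rfl (fun z _ => this z), val_transfer n (fun k : ℕ => if k = 0 then (0:ℤ) else if k ≤ n then 1 else -1)]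
  rw [Finset.range_eq_Ico, ← Finset.sum_Ico_consecutive _ (by omega : 0 ≤ 1) (by omega : 1 ≤ 2*n+1),
      ← Finset.sum_Ico_consecutive _ (by omega : 1 ≤ n+1) (by omega : n+1 ≤ 2*n+1)]
  have e1 : ∑ k ∈ Finset.Ico 0 1, (if k = 0 then (0:ℤ) else if k ≤ n then 1 else -1) = 0 := by simp
  have e2 : ∑ k ∈ Finset.Ico 1 (n+1), (if k = 0 then (0:ℤ) else if k ≤ n then 1 else -1) = n := by
    have h : ∀ k ∈ Finset.Ico 1 (n+1), (if k = 0 then (0:ℤ) else if k ≤ n then 1 else -1) = 1 := by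
      intro k hk; have := Finset.mem_Ico.mp hk; split_ifs <;> omega
    rw [Finset.sum_congr rfl h, Finset.sum_const, Nat.card_Ico]; simp
  have e3 : ∑ k ∈ Finset.Ico (n+1) (2*n+1), (if k = 0 then (0:ℤ) else if k ≤ n then 1 else -1) = -n := by
    have h : ∀ k ∈ Finset.Ico (n+1) (2*n+1), (if k = 0 then (0:ℤ) else if k ≤ n then 1 else -1) = -1 := by
      intro k hk; have := Finset.mem_Ico.mp hk; split_ifs <;> omega
    rw [Finset.sum_congr rfl h, Finset.sum_const, Nat.card_Ico]
    have : 2*n+1 - (n+1) = n := by omega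
    rw [this]; simp
  rw [e1, e2, e3]; ring

lemma chi_sum_sub_right (hn : 0 < n) (c : ZMod (2*n+1)) : ∑ z : ZMod (2*n+1), chi n (z - c) = 0 := by
  have := Fintype.sum_equiv (Equiv.addRight c) (fun z => chi n z) (fun z => chi n (z - c))
    (fun x => by simp)
  rw [← this, chi_sum_zero n hn]

lemma chi_sum_sub_left (hn : 0 < n) (c : ZMod (2*n+1)) : ∑ z : ZMod (2*n+1), chi n (c - z) = 0 := by
  have h : ∀ z : ZMod (2*n+1), chi n (c - z) = - chi n (z - c) := by
    intro z; rw [← neg_sub, chi_neg n _ hn]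
  rw [Finset.sum_congr rfl (fun z _ => h z), Finset.sum_neg_distrib, chi_sum_sub_right n hn c, neg_zero]

lemma perm_row (hn : 0 < n) (σ : Equiv.Perm (ZMod (2*n+1))) (c : ZMod (2*n+1)) :
    ∑ j, chi n (σ j - c) = 0 := by
  rw [Equiv.sum_comp σ (fun y => chi n (y - c))]
  exact chi_sum_sub_right n hn c

lemma perm_col (hn : 0 < n) (σ : Equiv.Perm (ZMod (2*n+1))) (c : ZMod (2*n+1)) :
    ∑ j, chi n (c - σ j) = 0 := by
  rw [Equiv.sum_comp σ (fun y => chi n (c - y))]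
  exact chi_sum_sub_left n hn c

lemma gsum (M : ℕ) (C : ℤ) : ∑ k ∈ Finset.range M, (2*(k:ℤ) - C) = M*(M-1) - M*C := by
  induction M with
  | zero => simp
  | succ m ih => rw [Finset.sum_range_succ, ih]; push_cast; ring

lemma Wt_add (hn : 0 < n) (i d : ZMod (2*n+1)) (hd : d ≠ 0) :
    Wt n i (i + d) = if i.val + d.val < 2*n+1 then (1:ℤ) else -1 := by
  have hdv : d.val ≠ 0 := fun h => hd (ZMod.val_injective _ (by simpa using h))
  have hdlt : d.val < 2*n+1 := d.val_lt
  have hilt : i.val < 2*n+1 := i.val_lt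
  have hk : (i + d).val = (i.val + d.val) % (2*n+1) := ZMod.val_add i d
  have hm : i.val + d.val < 2*n+1 ∧ (i+d).val = i.val + d.val ∨
      2*n+1 ≤ i.val + d.val ∧ (i+d).val + (2*n+1) = i.val + d.val := by
    rcases lt_or_ge (i.val + d.val) (2*n+1) with h | h
    · left; exact ⟨h, by rw [hk, Nat.mod_eq_of_lt h]⟩
    · right
      refine ⟨h, ?_⟩
      have h2 : i.val + d.val - (2*n+1) < 2*n+1 := by omega
      rw [hk, Nat.mod_eq_sub_mod h, Nat.mod_eq_of_lt h2]
      omega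
  unfold Wt
  split_ifs <;> omega

lemma sum_Wt (hn : 0 < n) (d : ZMod (2*n+1)) (hd : d ≠ 0) :
    ∑ i : ZMod (2*n+1), Wt n i (i + d) = (2*n+1 : ℤ) - 2 * d.val := by
  have hdv : d.val ≠ 0 := fun h => hd (ZMod.val_injective _ (by simpa using h))
  have hdlt : d.val < 2*n+1 := d.val_lt
  have h1 : ∀ i : ZMod (2*n+1), Wt n i (i + d)
      = (fun k : ℕ => if k + d.val < 2*n+1 then (1:ℤ) else -1) i.val := by
    intro i; exact Wt_add n hn i d hd
  rw [Finset.sum_congr rfl (fun i _ => h1 i),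
    val_transfer n (fun k : ℕ => if k + d.val < 2*n+1 then (1:ℤ) else -1)]
  rw [Finset.range_eq_Ico,
    ← Finset.sum_Ico_consecutive _ (by omega : 0 ≤ 2*n+1 - d.val) (by omega : 2*n+1 - d.val ≤ 2*n+1)]
  have e1 : ∀ k ∈ Finset.Ico 0 (2*n+1 - d.val), (if k + d.val < 2*n+1 then (1:ℤ) else -1) = 1 := by
    intro k hk; have := Finset.mem_Ico.mp hk; split_ifs <;> omega
  have e2 : ∀ k ∈ Finset.Ico (2*n+1 - d.val) (2*n+1), (if k + d.val < 2*n+1 then (1:ℤ) else -1) = -1 := by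
    intro k hk; have := Finset.mem_Ico.mp hk; split_ifs <;> omega
  rw [Finset.sum_congr rfl e1, Finset.sum_congr rfl e2, Finset.sum_const, Finset.sum_const,
    Nat.card_Ico, Nat.card_Ico]
  have c1 : 2*n+1 - d.val - 0 = 2*n+1 - d.val := by omega
  have c2 : 2*n+1 - (2*n+1 - d.val) = d.val := by omega
  rw [c1, c2]
  simp only [nsmul_eq_mul, mul_one, mul_neg]
  push_cast [Nat.cast_sub (by omega : d.val ≤ 2*n+1)]
  ring

lemma Phi_one (hn : 0 < n) : Phi n 1 = 2 * n^2 := by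
  unfold Phi
  have inner : ∀ i : ZMod (2*n+1), ∑ j, Wt n i j * chi n ((1 : Equiv.Perm (ZMod (2*n+1))) j - (1 : Equiv.Perm (ZMod (2*n+1))) i)
      = ∑ d, Wt n i (i + d) * chi n d := by
    intro i
    refine (Fintype.sum_equiv (Equiv.addLeft i) _ _ ?_).symm
    intro d
    simp [Equiv.Perm.one_apply, add_sub_cancel_left]
  rw [Finset.sum_congr rfl (fun i _ => inner i), Finset.sum_comm]
  have pt : ∀ d : ZMod (2*n+1), ∑ i, Wt n i (i + d) * chi n d
      = ((2*n+1 : ℤ) - 2 * d.val) * chi n d := by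
    intro d
    rw [← Finset.sum_mul]
    rcases eq_or_ne d 0 with rfl | hd
    · have : chi n 0 = 0 := by simp [chi]
      rw [this, mul_zero, mul_zero]
    · rw [sum_Wt n hn d hd]
  rw [Finset.sum_congr rfl (fun d _ => pt d)]
  have form : ∀ d : ZMod (2*n+1), ((2*n+1 : ℤ) - 2 * d.val) * chi n d
      = (fun k : ℕ => ((2*n+1 : ℤ) - 2 * k) * (if k = 0 then (0:ℤ) else if k ≤ n then 1 else -1)) d.val :=
    fun d => rfl
  rw [Finset.sum_congr rfl (fun d _ => form d),
    val_transfer n (fun k : ℕ => ((2*n+1 : ℤ) - 2 * k) * (if k = 0 then (0:ℤ) else if k ≤ n then 1 else -1))]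
  rw [Finset.range_eq_Ico,
    ← Finset.sum_Ico_consecutive _ (by omega : 0 ≤ 1) (by omega : 1 ≤ 2*n+1),
    ← Finset.sum_Ico_consecutive _ (by omega : 1 ≤ n+1) (by omega : n+1 ≤ 2*n+1)]
  have e1 : ∑ k ∈ Finset.Ico 0 1, ((2*n+1 : ℤ) - 2 * k) * (if k = 0 then (0:ℤ) else if k ≤ n then 1 else -1) = 0 := by
    simp
  have e2 : ∑ k ∈ Finset.Ico 1 (n+1), ((2*n+1 : ℤ) - 2 * k) * (if k = 0 then (0:ℤ) else if k ≤ n then 1 else -1) = n^2 := by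
    have h : ∀ k ∈ Finset.Ico 1 (n+1), ((2*n+1 : ℤ) - 2 * k) * (if k = 0 then (0:ℤ) else if k ≤ n then 1 else -1)
        = -(2*(k:ℤ) - (2*n+1)) := by
      intro k hk; have := Finset.mem_Ico.mp hk
      split_ifs <;> [omega; ring; omega]
    rw [Finset.sum_congr rfl h, Finset.sum_neg_distrib,
      Finset.sum_Ico_eq_sub _ (by omega : 1 ≤ n+1), gsum, gsum]
    push_cast
    ring
  have e3 : ∑ k ∈ Finset.Ico (n+1) (2*n+1), ((2*n+1 : ℤ) - 2 * k) * (if k = 0 then (0:ℤ) else if k ≤ n then 1 else -1) = n^2 := by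
    have h : ∀ k ∈ Finset.Ico (n+1) (2*n+1), ((2*n+1 : ℤ) - 2 * k) * (if k = 0 then (0:ℤ) else if k ≤ n then 1 else -1)
        = (2*(k:ℤ) - (2*n+1)) := by
      intro k hk; have := Finset.mem_Ico.mp hk
      split_ifs <;> [omega; omega; ring]
    rw [Finset.sum_congr rfl h,
      Finset.sum_Ico_eq_sub _ (by omega : n+1 ≤ 2*n+1), gsum, gsum]
    push_cast
    ring
  rw [e1, e2, e3]
  ring

set_option maxHeartbeats 4000000 in
lemma Dval (N p q s r : ℕ) (hN : 2 ≤ N) (hp : p < N) (hq : q < N) (hs : s < N) (hr : r < N)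
    (hw : r = s + 1 ∨ (s = N - 1 ∧ r = 0)) :
    (if (if p = s then r else if p = r then s else p) < (if q = s then r else if q = r then s else q) then (1:ℤ)
      else if (if q = s then r else if q = r then s else q) < (if p = s then r else if p = r then s else p) then -1 else 0)
    - (if p < q then (1:ℤ) else if q < p then -1 else 0)
    = ((if r = s + 1 then 0 else if p = s then 2 else if p = r then -2 else 0)
      - (if r = s + 1 then 0 else if q = s then 2 else if q = r then -2 else 0))
      + (if p = s then (if q = r then (-2:ℤ) else 0) else if p = r then (if q = s then 2 else 0) else 0) := by
  rcases hw with rfl | ⟨rfl, rfl⟩ <;> split_ifs <;> first | contradiction | omega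

def Uf (t i : ZMod (2*n+1)) : ℤ :=
  if (t+1 : ZMod (2*n+1)).val = t.val + 1 then 0
  else if i.val = t.val then 2 else if i.val = (t+1 : ZMod (2*n+1)).val then -2 else 0

def Vf (t i j : ZMod (2*n+1)) : ℤ :=
  if i.val = t.val then (if j.val = (t+1 : ZMod (2*n+1)).val then (-2:ℤ) else 0)
  else if i.val = (t+1 : ZMod (2*n+1)).val then (if j.val = t.val then 2 else 0) else 0

lemma swap_val (t i : ZMod (2*n+1)) :
    ((Equiv.swap t (t+1)) i).val
      = if i.val = t.val then (t+1 : ZMod (2*n+1)).val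
        else if i.val = (t+1 : ZMod (2*n+1)).val then t.val else i.val := by
  rcases eq_or_ne i t with rfl | h1
  · rw [Equiv.swap_apply_left, if_pos rfl]
  · have h1v : i.val ≠ t.val := fun h => h1 (ZMod.val_injective _ h)
    rcases eq_or_ne i (t+1) with rfl | h2
    · rw [Equiv.swap_apply_right, if_neg h1v, if_pos rfl]
    · have h2v : i.val ≠ (t+1 : ZMod (2*n+1)).val := fun h => h2 (ZMod.val_injective _ h)
      rw [Equiv.swap_apply_of_ne_of_ne h1 h2, if_neg h1v, if_neg h2v]

lemma hvb (hn : 0 < n) (t : ZMod (2*n+1)) :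
    (t+1 : ZMod (2*n+1)).val = t.val + 1
      ∨ (t.val = (2*n+1) - 1 ∧ (t+1 : ZMod (2*n+1)).val = 0) := by
  haveI : Fact (1 < 2*n+1) := ⟨by omega⟩
  have h1 : (t+1 : ZMod (2*n+1)).val = (t.val + 1) % (2*n+1) := by
    rw [ZMod.val_add, ZMod.val_one]
  have h2 : t.val < 2*n+1 := t.val_lt
  rcases lt_or_ge (t.val + 1) (2*n+1) with h | h
  · left; rw [h1, Nat.mod_eq_of_lt h]
  · right
    have h3 : t.val = 2*n := by omega
    refine ⟨by omega, ?_⟩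
    rw [h1, h3]
    simp

lemma Dfull (hn : 0 < n) (t i j : ZMod (2*n+1)) :
    Wt n (Equiv.swap t (t+1) i) (Equiv.swap t (t+1) j) - Wt n i j
      = (Uf n t i - Uf n t j) + Vf n t i j := by
  have h := Dval (2*n+1) i.val j.val t.val (t+1 : ZMod (2*n+1)).val (by omega)
    i.val_lt j.val_lt t.val_lt (t+1 : ZMod (2*n+1)).val_lt (hvb n hn t)
  unfold Wt Uf Vf
  rw [swap_val, swap_val]
  exact h

lemma chi_le (z : ZMod (2*n+1)) : chi n z ≤ 1 := by
  unfold chi; split_ifs <;> omega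

lemma key_s12 (hn : 0 < n) (σ : Equiv.Perm (ZMod (2*n+1))) (t : ZMod (2*n+1)) :
    Phi n (σ * Equiv.swap t (t+1)) = Phi n σ - 4 * chi n (σ (t+1) - σ t) := by
  set e := Equiv.swap t (t+1) with he
  have hne : t ≠ t + 1 := by
    intro h
    have : (t + 1 : ZMod (2*n+1)).val = t.val := by rw [← h]
    rcases hvb n hn t with h1 | ⟨h1, h2⟩ <;> omega
  -- Step 1: reindex
  have step1 : Phi n (σ * e) = ∑ i, ∑ j, Wt n (e i) (e j) * chi n (σ j - σ i) := by
    unfold Phi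
    simp only [Equiv.Perm.mul_apply]
    rw [← Equiv.sum_comp e (fun i => ∑ j, Wt n i j * chi n (σ (e j) - σ (e i)))]
    refine Finset.sum_congr rfl (fun i _ => ?_)
    rw [← Equiv.sum_comp e (fun j => Wt n (e i) j * chi n (σ (e j) - σ (e (e i))))]
    refine Finset.sum_congr rfl (fun j _ => ?_)
    rw [Equiv.swap_apply_self, Equiv.swap_apply_self]
  have expand : ∀ i j : ZMod (2*n+1),
      Wt n (e i) (e j) * chi n (σ j - σ i)
        = Wt n i j * chi n (σ j - σ i)
          + (Uf n t i * chi n (σ j - σ i) - Uf n t j * chi n (σ j - σ i))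
          + Vf n t i j * chi n (σ j - σ i) := by
    intro i j
    have := Dfull n hn t i j
    have h2 : Wt n (e i) (e j) = Wt n i j + (Uf n t i - Uf n t j) + Vf n t i j := by
      rw [he]; linarith [Dfull n hn t i j]
    rw [h2]; ring
  rw [step1, Finset.sum_congr rfl (fun i _ => Finset.sum_congr rfl (fun j _ => expand i j))]
  simp only [Finset.sum_add_distrib, Finset.sum_sub_distrib]
  have S1 : ∑ i, ∑ j, Uf n t i * chi n (σ j - σ i) = 0 := by
    refine Finset.sum_eq_zero (fun i _ => ?_)
    rw [← Finset.mul_sum, perm_row n hn σ (σ i), mul_zero]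
  have S2 : ∑ i : ZMod (2*n+1), ∑ j, Uf n t j * chi n (σ j - σ i) = 0 := by
    rw [Finset.sum_comm]
    refine Finset.sum_eq_zero (fun j _ => ?_)
    have : ∀ i : ZMod (2*n+1), Uf n t j * chi n (σ j - σ i) = chi n (σ j - σ i) * Uf n t j :=
      fun i => mul_comm _ _
    rw [Finset.sum_congr rfl (fun i _ => this i), ← Finset.sum_mul, perm_col n hn σ (σ j), zero_mul]
  have tv : ∀ x y : ZMod (2*n+1), x.val = y.val ↔ x = y :=
    fun x y => ⟨fun h => ZMod.val_injective _ h, fun h => by rw [h]⟩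
  have S3 : ∑ i, ∑ j, Vf n t i j * chi n (σ j - σ i)
      = -2 * chi n (σ (t+1) - σ t) + 2 * chi n (σ t - σ (t+1)) := by
    have inner : ∀ i : ZMod (2*n+1), ∑ j, Vf n t i j * chi n (σ j - σ i)
        = (if i = t then -2 * chi n (σ (t+1) - σ i) else 0)
          + (if i = t + 1 then 2 * chi n (σ t - σ i) else 0) := by
      intro i
      by_cases h1 : i = t
      · rw [if_pos h1, if_neg (fun h => hne (h1.symm.trans h)), add_zero]
        have hv : ∀ j : ZMod (2*n+1), Vf n t i j * chi n (σ j - σ i)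
            = if j = t + 1 then -2 * chi n (σ j - σ i) else 0 := by
          intro j
          unfold Vf
          rw [if_pos ((tv i t).mpr h1)]
          by_cases hj : j = t + 1
          · rw [if_pos ((tv j (t+1)).mpr hj), if_pos hj]
          · rw [if_neg (fun h => hj ((tv j (t+1)).mp h)), if_neg hj, zero_mul]
        rw [Finset.sum_congr rfl (fun j _ => hv j), Finset.sum_ite_eq' Finset.univ (t+1)]
        simp
      · have h1v : ¬ i.val = t.val := fun h => h1 ((tv i t).mp h)
        by_cases h2 : i = t + 1
        · rw [if_neg h1, if_pos h2, zero_add]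
          have hv : ∀ j : ZMod (2*n+1), Vf n t i j * chi n (σ j - σ i)
              = if j = t then 2 * chi n (σ j - σ i) else 0 := by
            intro j
            unfold Vf
            rw [if_neg h1v, if_pos ((tv i (t+1)).mpr h2)]
            by_cases hj : j = t
            · rw [if_pos ((tv j t).mpr hj), if_pos hj]
            · rw [if_neg (fun h => hj ((tv j t).mp h)), if_neg hj, zero_mul]
          rw [Finset.sum_congr rfl (fun j _ => hv j), Finset.sum_ite_eq' Finset.univ t]
          simp
        · have h2v : ¬ i.val = (t+1 : ZMod (2*n+1)).val := fun h => h2 ((tv i (t+1)).mp h)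
          rw [if_neg h1, if_neg h2, add_zero]
          refine Finset.sum_eq_zero (fun j _ => ?_)
          unfold Vf
          rw [if_neg h1v, if_neg h2v, zero_mul]
    rw [Finset.sum_congr rfl (fun i _ => inner i), Finset.sum_add_distrib,
      Finset.sum_ite_eq' Finset.univ t, Finset.sum_ite_eq' Finset.univ (t+1)]
    simp
  rw [S1, S2, S3]
  have hsub : chi n (σ t - σ (t+1)) = - chi n (σ (t+1) - σ t) := by
    rw [← neg_sub, chi_neg n _ hn]
  rw [hsub]
  unfold Phi
  ring

lemma Phi_rev (hn : 0 < n) : Phi n (revPerm (2*n+1)) = - Phi n 1 := by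
  unfold Phi
  have hp : ∀ i j : ZMod (2*n+1),
      Wt n i j * chi n (revPerm (2*n+1) j - revPerm (2*n+1) i)
        = -(Wt n i j * chi n ((1 : Equiv.Perm (ZMod (2*n+1))) j - (1 : Equiv.Perm (ZMod (2*n+1))) i)) := by
    intro i j
    have h1 : revPerm (2*n+1) j = -1 - j := rfl
    have h2 : revPerm (2*n+1) i = -1 - i := rfl
    have h3 : revPerm (2*n+1) j - revPerm (2*n+1) i = -(j - i) := by rw [h1, h2]; ring
    rw [h3, chi_neg n _ hn]
    simp [Equiv.Perm.one_apply]
  rw [Finset.sum_congr rfl (fun i _ => Finset.sum_congr rfl (fun j _ => hp i j))]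
  simp [Finset.sum_neg_distrib]

lemma walk (hn : 0 < n) (l : List (ZMod (2*n+1))) :
    ∀ σ : Equiv.Perm (ZMod (2*n+1)),
      Phi n σ - 4 * l.length ≤ Phi n (σ * (l.map (fun x => Equiv.swap x (x + 1))).prod) := by
  induction l with
  | nil => intro σ; simp
  | cons x xs ih =>
    intro σ
    have h1 : σ * ((x :: xs).map (fun x => Equiv.swap x (x + 1))).prod
        = (σ * Equiv.swap x (x+1)) * (xs.map (fun x => Equiv.swap x (x + 1))).prod := by
      simp [List.map_cons, List.prod_cons, mul_assoc]
    rw [h1]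
    have h2 := ih (σ * Equiv.swap x (x+1))
    have h3 : Phi n σ - 4 ≤ Phi n (σ * Equiv.swap x (x+1)) := by
      rw [key_s12 n hn σ x]
      have := chi_le n ((σ * Equiv.swap x (x+1)) (x+1) - (σ * Equiv.swap x (x+1)) x)
      have := chi_le n (σ (x+1) - σ x)
      linarith
    have h4 : (↑(x :: xs).length : ℤ) = xs.length + 1 := by simp
    rw [h4]
    linarith

/-- Writing the reversal permutation `π(x) = N−1−x` of `Z_N`, `N = 2n+1` odd, as a
product of adjacent circular transpositions `τ_x = (x, x+1)` requires at least
`n² = (N−1)²/4` transpositions. -/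
theorem circular_bubble_sort_lower_bound (n : ℕ) (hn : 0 < n)
    (l : List (ZMod (2 * n + 1)))
    (h : (l.map (fun x => Equiv.swap x (x + 1))).prod = revPerm (2 * n + 1)) :
    n ^ 2 ≤ l.length := by
  have hw := walk n hn l 1
  rw [one_mul, h, Phi_rev n hn, Phi_one n hn] at hw
  have : (n : ℤ)^2 ≤ (l.length : ℤ) := by linarith
  exact_mod_cast this
end

section
/- For any ε ∈ {±1}^v and any n with v ≤ 2n+1, the number of strictly increasing sequences 0 ≤ t₁ < t₂ < ⋯ < t_v ≤ 2n with (−1)^{t_i} = ε_i for all i equals binom(n + z(ε), v), where z(ε) is the number of runs of +1's in ε. -/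
/-- The number of maximal runs of `+1`'s in the sequence `ε 0, …, ε (v−1)`. -/
def runCount (v : ℕ) (ε : ℕ → ℤ) : ℕ :=
  ((Finset.range v).filter (fun i => ε i = 1 ∧ (i = 0 ∨ ε (i - 1) = -1))).card

namespace CountParityAux

/-- number of "weak" transitions `+1, -1` starting before position `i`. -/
def wcount (ε : ℕ → ℤ) (i : ℕ) : ℕ :=
  ((Finset.range i).filter (fun j => ε j = 1 ∧ ε (j + 1) = -1)).card

lemma wcount_le (ε : ℕ → ℤ) (i : ℕ) : wcount ε i ≤ i :=
  le_trans (Finset.card_filter_le _ _) (by simp)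

lemma wcount_mono (ε : ℕ → ℤ) {a b : ℕ} (h : a ≤ b) : wcount ε a ≤ wcount ε b :=
  Finset.card_le_card (Finset.filter_subset_filter _ (by simpa using h))

lemma wcount_succ (ε : ℕ → ℤ) (i : ℕ) :
    wcount ε (i + 1) = wcount ε i + (if ε i = 1 ∧ ε (i + 1) = -1 then 1 else 0) := by
  unfold wcount
  rw [Finset.range_add_one, Finset.filter_insert]
  split
  · rw [Finset.card_insert_of_notMem (by simp)]
  · simp

lemma runCount_succ (v : ℕ) (ε : ℕ → ℤ) :
    runCount (v + 1) ε = runCount v ε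
      + (if ε v = 1 ∧ (v = 0 ∨ ε (v - 1) = -1) then 1 else 0) := by
  unfold runCount
  rw [Finset.range_add_one, Finset.filter_insert]
  split
  · rw [Finset.card_insert_of_notMem (by simp)]
  · simp

lemma wcount_spec (ε : ℕ → ℤ) :
    ∀ i, (∀ j ≤ i, ε j = 1 ∨ ε j = -1) →
      wcount ε i + (if ε i = 1 then 1 else 0) = runCount (i + 1) ε := by
  intro i
  induction i with
  | zero =>
    intro _
    simp only [wcount, runCount, Finset.range_zero, Finset.filter_empty,
      Finset.card_empty, Finset.range_one, Nat.zero_add]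
    split <;> rename_i h <;> simp [Finset.filter_singleton, h]
  | succ i ih =>
    intro h
    have h1 := h i (by omega)
    have h2 := h (i + 1) le_rfl
    have hi := ih (fun j hj => h j (by omega))
    rw [wcount_succ, runCount_succ]
    rcases h1 with e1 | e1 <;> rcases h2 with e2 | e2 <;>
      simp [e1, e2] at hi ⊢ <;> omega

lemma le_of_strictMono {v : ℕ} {u : Fin v → ℕ} (hu : StrictMono u) :
    ∀ k (hk : k < v), k ≤ u ⟨k, hk⟩ := by
  intro k
  induction k with
  | zero => intro _; exact Nat.zero_le _
  | succ k ih =>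
    intro hk
    have h1 := ih (by omega)
    have h2 := hu (show (⟨k, by omega⟩ : Fin v) < ⟨k + 1, hk⟩ by simp [Fin.lt_def])
    omega

/-- The number of strictly monotone maps `Fin v → [0, m)` is `C(m, v)`. -/
lemma ncard_strictMono_lt (v m : ℕ) :
    Set.ncard {u : Fin v → ℕ | StrictMono u ∧ ∀ i, u i < m} = Nat.choose m v := by
  classical
  set S : Set (Fin v → ℕ) := {u | StrictMono u ∧ ∀ i, u i < m}
  set F : (Fin v → ℕ) → Finset ℕ := fun u => Finset.univ.image u
  set T : Set (Finset ℕ) := (((Finset.range m).powersetCard v : Finset (Finset ℕ)) : Set (Finset ℕ))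
  have hcard : ∀ u ∈ S, (F u).card = v := by
    intro u hu
    rw [Finset.card_image_of_injective _ hu.1.injective, Finset.card_univ, Fintype.card_fin]
  have hmaps : ∀ u ∈ S, F u ∈ T := by
    intro u hu
    refine Finset.mem_coe.2 (Finset.mem_powersetCard.2 ⟨fun x hx => ?_, hcard u hu⟩)
    obtain ⟨i, _, rfl⟩ := Finset.mem_image.1 hx
    exact Finset.mem_range.2 (hu.2 i)
  have key : ∀ u, ∀ hu : u ∈ S, u = ⇑((F u).orderEmbOfFin (hcard u hu)) := by
    intro u hu
    exact Finset.orderEmbOfFin_unique (hcard u hu)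
      (fun i => Finset.mem_image_of_mem u (Finset.mem_univ i)) hu.1
  have hbij : Set.BijOn F S T := by
    refine ⟨hmaps, ?_, ?_⟩
    · intro u hu u' hu' he
      rw [key u hu, key u' hu']
      simp only [he]
    · intro s hs
      obtain ⟨hsub, hc⟩ := Finset.mem_powersetCard.1 (Finset.mem_coe.1 hs)
      refine ⟨fun i => s.orderEmbOfFin hc i, ⟨(s.orderEmbOfFin hc).strictMono, fun i => ?_⟩, ?_⟩
      · have := Finset.orderEmbOfFin_mem s hc i
        exact Finset.mem_range.1 (hsub this)
      · apply Finset.coe_injective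
        have := Finset.range_orderEmbOfFin s hc
        simp only [F]
        rw [Finset.coe_image, Finset.coe_univ, Set.image_univ]
        exact this
  calc S.ncard = (F '' S).ncard := (Set.ncard_image_of_injOn hbij.injOn).symm
    _ = T.ncard := by rw [hbij.image_eq]
    _ = Nat.choose m v := by
        simp only [T, Set.ncard_coe_finset, Finset.card_powersetCard, Finset.card_range]

end CountParityAux

/-- The number of strictly increasing sequences `0 ≤ t₁ < ⋯ < t_v ≤ 2n` with
`(−1)^{t_i} = ε_i` for all `i` equals `C(n + z(ε), v)`, where `z(ε)` is the number
of runs of `+1`'s in `ε`. -/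
theorem count_parity_sequences (n v : ℕ) (hv : v ≤ 2 * n + 1) (ε : ℕ → ℤ)
    (hε : ∀ i < v, ε i = 1 ∨ ε i = -1) :
    Set.ncard {t : Fin v → ℕ | StrictMono t ∧ (∀ i, t i ≤ 2 * n) ∧
        ∀ i : Fin v, (-1 : ℤ) ^ (t i) = ε (i : ℕ)} =
      Nat.choose (n + runCount v ε) v := by
  classical
  open CountParityAux in
  match v, hv, hε with
  | 0, hv, hε =>
    have : {t : Fin 0 → ℕ | StrictMono t ∧ (∀ i, t i ≤ 2 * n) ∧
        ∀ i : Fin 0, (-1 : ℤ) ^ (t i) = ε (i : ℕ)} = Set.univ := by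
      ext t
      simp only [Set.mem_setOf_eq, Set.mem_univ, iff_true]
      exact ⟨fun a => a.elim0, fun i => i.elim0, fun i => i.elim0⟩
    rw [this, Set.ncard_univ, Nat.card_unique, Nat.choose_zero_right]
  | (m + 1), hv, hε =>
    set z := runCount (m + 1) ε with hz
    set w : ℕ → ℕ := wcount ε with hw
    have hwz : w m + (if ε m = 1 then 1 else 0) = z :=
      wcount_spec ε m (fun j hj => hε j (by omega))
    set S : Set (Fin (m + 1) → ℕ) := {t | StrictMono t ∧ (∀ i, t i ≤ 2 * n) ∧
        ∀ i : Fin (m + 1), (-1 : ℤ) ^ (t i) = ε (i : ℕ)} with hS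
    set S' : Set (Fin (m + 1) → ℕ) := {u | StrictMono u ∧ ∀ i, u i < n + z} with hS'
    set G : (Fin (m + 1) → ℕ) → (Fin (m + 1) → ℕ) :=
      fun u i => 2 * (u i - w i) + (if ε (i : ℕ) = 1 then 0 else 1) with hG
    have hbij : Set.BijOn G S' S := by
      constructor
      · -- MapsTo
        intro u hu
        obtain ⟨hmono, hlt⟩ := hu
        have hle : ∀ i : Fin (m + 1), (i : ℕ) ≤ u i := fun i => by
          simpa using le_of_strictMono hmono i i.isLt
        have hwle : ∀ i : Fin (m + 1), w (i : ℕ) ≤ u i :=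
          fun i => le_trans (wcount_le ε i) (hle i)
        have hGmono : StrictMono (G u) := by
          rw [Fin.strictMono_iff_lt_succ]
          intro i
          have hab : u i.castSucc < u i.succ := hmono (Fin.castSucc_lt_succ : i.castSucc < i.succ)
          have haw : w (i : ℕ) ≤ u i.castSucc := by simpa using hwle i.castSucc
          have hws : w ((i : ℕ) + 1) = w (i : ℕ)
              + (if ε (i : ℕ) = 1 ∧ ε ((i : ℕ) + 1) = -1 then 1 else 0) := wcount_succ ε (i : ℕ)
          have hc : ((i.castSucc : Fin (m+1)) : ℕ) = (i : ℕ) := rfl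
          have hs : ((i.succ : Fin (m+1)) : ℕ) = (i : ℕ) + 1 := rfl
          simp only [hG, hc, hs]
          rcases hε i (by omega) with e1 | e1 <;> rcases hε (i + 1) (by omega) with e2 | e2 <;>
            simp only [e1, e2] at hws ⊢ <;> norm_num at hws ⊢ <;> omega
        refine ⟨hGmono, fun i => ?_, fun i => ?_⟩
        · -- bound
          have h1 : G u i ≤ G u (Fin.last m) := hGmono.monotone (Fin.le_last i)
          have h2 : u (Fin.last m) < n + z := hlt _
          have h3 : w m ≤ u (Fin.last m) := by simpa using hwle (Fin.last m)
          have h4 : (m : ℕ) ≤ u (Fin.last m) := by simpa using hle (Fin.last m)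
          have h5 : w m ≤ m := wcount_le ε m
          have hl : ((Fin.last m : Fin (m+1)) : ℕ) = m := rfl
          refine le_trans h1 ?_
          simp only [hG, hl]
          rcases hε m (by omega) with e1 | e1 <;>
            simp only [e1] at hwz ⊢ <;> norm_num at hwz ⊢ <;> omega
        · -- parity
          simp only [hG]
          rcases hε i i.isLt with e1 | e1 <;>
            simp [e1, pow_add, pow_mul]
      constructor
      · -- InjOn
        intro u hu u' hu' he
        have hle : ∀ i : Fin (m + 1), w (i : ℕ) ≤ u i := fun i =>
          le_trans (le_trans (wcount_le ε i) (by simpa using le_of_strictMono hu.1 i i.isLt))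
            le_rfl
        have hle' : ∀ i : Fin (m + 1), w (i : ℕ) ≤ u' i := fun i =>
          le_trans (le_trans (wcount_le ε i) (by simpa using le_of_strictMono hu'.1 i i.isLt))
            le_rfl
        funext i
        have := congrFun he i
        simp only [hG] at this
        have h1 := hle i
        have h2 := hle' i
        omega
      · -- SurjOn
        intro t ht
        obtain ⟨hmono, hbd, hpar⟩ := ht
        have hmod : ∀ i : Fin (m + 1), t i % 2 = (if ε (i : ℕ) = 1 then 0 else 1) := by
          intro i
          have hp := hpar i
          rcases Nat.even_or_odd (t i) with he | ho
          · rw [he.neg_one_pow] at hp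
            rw [Nat.even_iff] at he
            simp [← hp, he]
          · rw [ho.neg_one_pow] at hp
            rw [Nat.odd_iff] at ho
            rcases hε i i.isLt with e1 | e1
            · rw [e1] at hp; norm_num at hp
            · simp [e1, ho]
        refine ⟨fun i => t i / 2 + w (i : ℕ), ?_, ?_⟩
        · -- membership in S'
          have humono : StrictMono (fun i : Fin (m+1) => t i / 2 + w (i : ℕ)) := by
            rw [Fin.strictMono_iff_lt_succ]
            intro i
            have hab : t i.castSucc < t i.succ := hmono (Fin.castSucc_lt_succ : i.castSucc < i.succ)
            have hm1 := hmod i.castSucc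
            have hm2 := hmod i.succ
            have hws : w ((i : ℕ) + 1) = w (i : ℕ)
                + (if ε (i : ℕ) = 1 ∧ ε ((i : ℕ) + 1) = -1 then 1 else 0) := wcount_succ ε (i : ℕ)
            have hc : ((i.castSucc : Fin (m+1)) : ℕ) = (i : ℕ) := rfl
            have hs : ((i.succ : Fin (m+1)) : ℕ) = (i : ℕ) + 1 := rfl
            simp only [hc, hs] at hm1 hm2 ⊢
            rcases hε i (by omega) with e1 | e1 <;> rcases hε (i + 1) (by omega) with e2 | e2 <;>
              simp only [e1, e2] at hws hm1 hm2 ⊢ <;> norm_num at hws hm1 hm2 ⊢ <;> omega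
          refine ⟨humono, fun i => ?_⟩
          have h1 : t i / 2 + w (i : ℕ) ≤ t (Fin.last m) / 2 + w m :=
            humono.monotone (Fin.le_last i)
          have h2 : t (Fin.last m) ≤ 2 * n := hbd _
          have h3 := hmod (Fin.last m)
          have hl : ((Fin.last m : Fin (m+1)) : ℕ) = m := rfl
          simp only [hl] at h3
          refine lt_of_le_of_lt h1 ?_
          rcases hε m (by omega) with e1 | e1 <;>
            simp only [e1] at hwz h3 ⊢ <;> norm_num at hwz h3 ⊢ <;> omega
        · -- G u = t
          funext i
          have h1 := hmod i
          simp only [hG, Nat.add_sub_cancel]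
          omega
    calc S.ncard = (G '' S').ncard := by rw [hbij.image_eq]
      _ = S'.ncard := Set.ncard_image_of_injOn hbij.injOn
      _ = Nat.choose (n + z) (m + 1) := ncard_strictMono_lt (m + 1) (n + z)
end

section
/- For a uniformly random permutation π ∈ S_{2n+1}, the second moment of the writhe is E[w(π)²] = (2n² + n)/3. -/
open Finset Equiv

variable {n : ℕ}

private def s (n : ℕ) (π : Perm (ZMod (2*n+1))) (a b : ZMod (2*n+1)) : ℤ :=
  if (π a).val < (π b).val then 1 else -1

private lemma val_ne (π : Perm (ZMod (2*n+1))) {a b : ZMod (2*n+1)} (hab : a ≠ b) :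
    (π a).val ≠ (π b).val := fun h =>
  hab (π.injective (ZMod.val_injective _ h))

private lemma reindex (τ : Perm (ZMod (2*n+1))) (F : Perm (ZMod (2*n+1)) → ℤ) :
    ∑ π : Perm (ZMod (2*n+1)), F (π * τ) = ∑ π : Perm (ZMod (2*n+1)), F π :=
  Fintype.sum_equiv (Equiv.mulRight τ) _ _ (fun _ => rfl)

private lemma s_mul (π τ : Perm (ZMod (2*n+1))) (a b : ZMod (2*n+1)) :
    s n (π * τ) a b = s n π (τ a) (τ b) := rfl

private lemma s_neg (π : Perm (ZMod (2*n+1))) {a b : ZMod (2*n+1)} (hab : a ≠ b) :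
    s n π a b = - s n π b a := by
  have h := val_ne π hab
  unfold s; split_ifs <;> omega

private lemma s_sq (π : Perm (ZMod (2*n+1))) (a b : ZMod (2*n+1)) :
    s n π a b * s n π a b = 1 := by
  unfold s; split_ifs <;> norm_num

-- four (essentially) distinct points
private lemma L1 {a b c d : ZMod (2*n+1)} (hab : a ≠ b) (hca : c ≠ a) (hcb : c ≠ b)
    (hda : d ≠ a) (hdb : d ≠ b) :
    ∑ π : Perm (ZMod (2*n+1)), s n π a b * s n π c d = 0 := by
  have h := reindex (swap a b) (fun π => s n π a b * s n π c d)
  have h2 : ∀ π : Perm (ZMod (2*n+1)),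
      s n (π * swap a b) a b * s n (π * swap a b) c d = -(s n π a b * s n π c d) := by
    intro π
    rw [s_mul, s_mul, swap_apply_left, swap_apply_right,
      swap_apply_of_ne_of_ne hca hcb, swap_apply_of_ne_of_ne hda hdb, s_neg π hab.symm]
    ring
  rw [Finset.sum_congr rfl (fun π _ => h2 π), Finset.sum_neg_distrib] at h
  linarith

private lemma tri (x y z : ℕ) (hxy : x ≠ y) (hxz : x ≠ z) (hyz : y ≠ z) :
    ((if x < y then (1:ℤ) else -1) * (if x < z then 1 else -1)) +
    ((if y < x then (1:ℤ) else -1) * (if y < z then 1 else -1)) +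
    ((if z < x then (1:ℤ) else -1) * (if z < y then 1 else -1)) = 1 := by
  split_ifs <;> omega

private lemma L2 {a b d : ZMod (2*n+1)} (hab : a ≠ b) (had : a ≠ d) (hbd : b ≠ d) :
    3 * ∑ π : Perm (ZMod (2*n+1)), s n π a b * s n π a d =
      (Fintype.card (Perm (ZMod (2*n+1))) : ℤ) := by
  have E1 : ∑ π : Perm (ZMod (2*n+1)), s n π b a * s n π b d
      = ∑ π : Perm (ZMod (2*n+1)), s n π a b * s n π a d := by
    rw [← reindex (swap a b) (fun π => s n π a b * s n π a d)]
    refine Finset.sum_congr rfl fun π _ => ?_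
    rw [s_mul, s_mul, swap_apply_left, swap_apply_right,
      swap_apply_of_ne_of_ne (Ne.symm had) (Ne.symm hbd)]
  have E2 : ∑ π : Perm (ZMod (2*n+1)), s n π d a * s n π d b
      = ∑ π : Perm (ZMod (2*n+1)), s n π a b * s n π a d := by
    rw [← reindex (swap a d) (fun π => s n π a b * s n π a d)]
    refine Finset.sum_congr rfl fun π _ => ?_
    rw [s_mul, s_mul, swap_apply_left, swap_apply_right,
      swap_apply_of_ne_of_ne (Ne.symm hab) hbd, mul_comm]
  have key : ∑ π : Perm (ZMod (2*n+1)),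
      (s n π a b * s n π a d + s n π b a * s n π b d + s n π d a * s n π d b)
      = (Fintype.card (Perm (ZMod (2*n+1))) : ℤ) := by
    have h1 : ∀ π : Perm (ZMod (2*n+1)),
        s n π a b * s n π a d + s n π b a * s n π b d + s n π d a * s n π d b = 1 :=
      fun π => tri ((π a).val) ((π b).val) ((π d).val) (val_ne π hab) (val_ne π had) (val_ne π hbd)
    rw [Finset.sum_congr rfl (fun π _ => h1 π)]
    simp [Finset.card_univ]
  rw [Finset.sum_add_distrib, Finset.sum_add_distrib, E1, E2] at key
  linarith

private lemma key_s15 {i i' k k' : ZMod (2*n+1)} (hk : k ≠ 0) (hk' : k' ≠ 0)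
    (hkk' : k + k' ≠ 0) :
    3 * ∑ π : Perm (ZMod (2*n+1)), s n π i (i+k) * s n π i' (i'+k') =
    (Fintype.card (Perm (ZMod (2*n+1))) : ℤ) *
      ((if i = i' ∧ k = k' then 3 else 0) + (if i = i' ∧ k ≠ k' then 1 else 0) +
       (if i + k = i' + k' ∧ i ≠ i' then 1 else 0) - (if i = i' + k' then 1 else 0) -
       (if i' = i + k then 1 else 0)) := by
  have hik : i ≠ i + k := fun h => hk (by linear_combination -h)
  have hik' : i' ≠ i' + k' := fun h => hk' (by linear_combination -h)
  by_cases h1 : i = i'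
  · subst h1
    by_cases h2 : k = k'
    · subst h2
      have : ∑ π : Perm (ZMod (2*n+1)), s n π i (i+k) * s n π i (i+k)
          = (Fintype.card (Perm (ZMod (2*n+1))) : ℤ) := by
        rw [Finset.sum_congr rfl (fun π _ => s_sq π i (i+k))]
        simp [Finset.card_univ]
      rw [this]
      have e4 : ¬ (i = i + k) := hik
      simp [e4, hik.symm]
      ring
    · -- shared tail
      have hbd : i + k ≠ i + k' := fun h => h2 (by linear_combination h)
      rw [L2 hik hik' hbd]
      have e3 : ¬ (i + k = i + k' ∧ i ≠ i) := fun h => h.2 rfl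
      simp [h2, e3, hik', hik.symm, hk, hk']
  · by_cases h3 : i + k = i' + k'
    · -- shared head
      have hbi : i + k ≠ i := hik.symm
      have hbi' : i + k ≠ i' := by rw [h3]; exact hik'.symm
      have ptw : ∀ π : Perm (ZMod (2*n+1)),
          s n π i (i+k) * s n π i' (i'+k') = s n π (i+k) i * s n π (i+k) i' := by
        intro π
        rw [← h3, s_neg π hik, s_neg π (by rw [h3]; exact hik' : i' ≠ i + k)]
        ring
      rw [Finset.sum_congr rfl (fun π _ => ptw π), L2 hbi hbi' h1]
      have e4 : i ≠ i' + k' := fun h => hk (by linear_combination h3 - h)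
      have e5 : i' ≠ i + k := hbi'.symm
      simp [h1, h3, e4, e5, hk, hk']
    · by_cases h4 : i = i' + k'
      · -- a = d
        have hbc : i + k ≠ i' := fun h => hkk' (by linear_combination h - h4)
        have ptw : ∀ π : Perm (ZMod (2*n+1)),
            s n π i (i+k) * s n π i' (i'+k') = -(s n π i (i+k) * s n π i i') := by
          intro π
          rw [← h4, s_neg π (Ne.symm h1)]
          ring
        rw [Finset.sum_congr rfl (fun π _ => ptw π), Finset.sum_neg_distrib,
          mul_neg, L2 hik h1 hbc]
        have e5 : i' ≠ i + k := Ne.symm hbc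
        have e6 : i' ≠ i' + k' + k := fun h => hkk' (by linear_combination -h)
        simp [h1, h3, h4, e5, e6, hk, hk']
      · by_cases h5 : i' = i + k
        · -- b = c
          have ptw : ∀ π : Perm (ZMod (2*n+1)),
              s n π i (i+k) * s n π i' (i'+k') = -(s n π i' i * s n π i' (i'+k')) := by
            intro π
            rw [s_neg π hik, ← h5]
            ring
          rw [Finset.sum_congr rfl (fun π _ => ptw π), Finset.sum_neg_distrib,
            mul_neg, L2 (Ne.symm h1) hik' h4]
          have e7 : i ≠ i + k + k' := fun h => hkk' (by linear_combination -h)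
          simp [h1, h3, h4, h5, e7, hk, hk']
        · -- all distinct
          rw [L1 hik (Ne.symm h1) h5 (fun h => h4 h.symm) (fun h => h3 h.symm)]
          simp [h1, h3, h4, h5]

private lemma cast_ne_zero {m : ℕ} (h0 : 0 < m) (h1 : m < 2*n+1) :
    ((m : ℕ) : ZMod (2*n+1)) ≠ 0 := by
  intro h
  rw [← ZMod.val_eq_zero, ZMod.val_cast_of_lt h1] at h
  omega

private lemma castInj {a b : ℕ} (ha : a < 2*n+1) (hb : b < 2*n+1) :
    ((a : ℕ) : ZMod (2*n+1)) = ((b : ℕ) : ZMod (2*n+1)) ↔ a = b := by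
  constructor
  · intro h
    have := congrArg ZMod.val h
    rwa [ZMod.val_cast_of_lt ha, ZMod.val_cast_of_lt hb] at this
  · intro h; rw [h]

private lemma inner_count (i : ZMod (2*n+1)) (j : ℕ) (hj : j ∈ Finset.range n) :
    ∑ j' ∈ Finset.range n, ∑ i' : ZMod (2*n+1),
      ((if i = i' ∧ ((j+1:ℕ) : ZMod (2*n+1)) = ((j'+1:ℕ) : ZMod (2*n+1)) then 3 else 0) +
       (if i = i' ∧ ((j+1:ℕ) : ZMod (2*n+1)) ≠ ((j'+1:ℕ) : ZMod (2*n+1)) then 1 else 0) +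
       (if i + ((j+1:ℕ) : ZMod (2*n+1)) = i' + ((j'+1:ℕ) : ZMod (2*n+1)) ∧ i ≠ i'
          then 1 else 0) -
       (if i = i' + ((j'+1:ℕ) : ZMod (2*n+1)) then 1 else 0) -
       (if i' = i + ((j+1:ℕ) : ZMod (2*n+1)) then 1 else 0) : ℤ) = 1 := by
  rw [Finset.mem_range] at hj
  have step : ∀ j' ∈ Finset.range n, (∑ i' : ZMod (2*n+1),
      ((if i = i' ∧ ((j+1:ℕ) : ZMod (2*n+1)) = ((j'+1:ℕ) : ZMod (2*n+1)) then 3 else 0) +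
       (if i = i' ∧ ((j+1:ℕ) : ZMod (2*n+1)) ≠ ((j'+1:ℕ) : ZMod (2*n+1)) then 1 else 0) +
       (if i + ((j+1:ℕ) : ZMod (2*n+1)) = i' + ((j'+1:ℕ) : ZMod (2*n+1)) ∧ i ≠ i'
          then 1 else 0) -
       (if i = i' + ((j'+1:ℕ) : ZMod (2*n+1)) then 1 else 0) -
       (if i' = i + ((j+1:ℕ) : ZMod (2*n+1)) then 1 else 0) : ℤ)) =
      (if j' = j then 3 else 0) + (if j' = j then 0 else 2) - 2 := by
    intro j' hj'
    rw [Finset.mem_range] at hj'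
    set k : ZMod (2*n+1) := ((j+1:ℕ) : ZMod (2*n+1)) with hkdef
    set k' : ZMod (2*n+1) := ((j'+1:ℕ) : ZMod (2*n+1)) with hk'def
    have hkk : k = k' ↔ j' = j := by
      rw [hkdef, hk'def, castInj (by omega) (by omega)]
      constructor <;> omega
    have A1 : (∑ i' : ZMod (2*n+1), (if i = i' ∧ k = k' then (3:ℤ) else 0)) =
        (if j' = j then 3 else 0) := by
      simp only [ite_and, Finset.sum_ite_eq, Finset.mem_univ, if_true]
      exact if_congr hkk rfl rfl
    have A2 : (∑ i' : ZMod (2*n+1), (if i = i' ∧ k ≠ k' then (1:ℤ) else 0)) =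
        (if j' = j then 0 else 1) := by
      simp only [ite_and, Finset.sum_ite_eq, Finset.mem_univ, if_true]
      rcases eq_or_ne j' j with h | h
      · simp [hkk.mpr h, h]
      · have : ¬ k = k' := fun hh => h (hkk.mp hh)
        simp [h, this]
    have A3 : (∑ i' : ZMod (2*n+1),
        (if i + k = i' + k' ∧ i ≠ i' then (1:ℤ) else 0)) =
        (if j' = j then 0 else 1) := by
      have hiff : ∀ i' : ZMod (2*n+1),
          (i + k = i' + k' ∧ i ≠ i') ↔ (i' = i + k - k' ∧ ¬ j' = j) := by
        intro i'
        constructor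
        · rintro ⟨h, hne⟩
          refine ⟨by linear_combination -h, fun hjj => ?_⟩
          apply hne
          have : k = k' := hkk.mpr hjj
          rw [this] at h
          exact add_right_cancel h
        · rintro ⟨h, hjj⟩
          have hkne : k ≠ k' := fun hh => hjj (hkk.mp hh)
          refine ⟨by linear_combination -h, fun hii => ?_⟩
          apply hkne
          rw [← hii] at h
          linear_combination -h
      rw [Finset.sum_congr rfl fun i' _ => if_congr (hiff i') rfl rfl]
      simp only [ite_and, Finset.sum_ite_eq', Finset.mem_univ, if_true]
      rcases eq_or_ne j' j with h | h <;> simp [h]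
    have A4 : (∑ i' : ZMod (2*n+1), (if i = i' + k' then (1:ℤ) else 0)) = 1 := by
      have hiff : ∀ i' : ZMod (2*n+1), (i = i' + k') ↔ (i' = i - k') := by
        intro i'; constructor <;> intro h <;> linear_combination -h
      rw [Finset.sum_congr rfl fun i' _ => if_congr (hiff i') rfl rfl]
      simp [Finset.sum_ite_eq']
    have A5 : (∑ i' : ZMod (2*n+1), (if i' = i + k then (1:ℤ) else 0)) = 1 := by
      simp [Finset.sum_ite_eq']
    rw [Finset.sum_sub_distrib, Finset.sum_sub_distrib, Finset.sum_add_distrib,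
      Finset.sum_add_distrib, A1, A2, A3, A4, A5]
    rcases eq_or_ne j' j with h | h <;> simp [h]
  rw [Finset.sum_congr rfl step, Finset.sum_sub_distrib, Finset.sum_add_distrib,
    Finset.sum_ite_eq' (Finset.range n) j, Finset.sum_const, Finset.card_range]
  have h2 : (∑ j' ∈ Finset.range n, (if j' = j then (0:ℤ) else 2)) = 2*n - 2 := by
    have : ∀ j' ∈ Finset.range n, (if j' = j then (0:ℤ) else 2) =
        2 - (if j' = j then 2 else 0) := by
      intro j' _; rcases eq_or_ne j' j with h | h <;> simp [h]
    rw [Finset.sum_congr rfl this, Finset.sum_sub_distrib,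
      Finset.sum_ite_eq' (Finset.range n) j, Finset.sum_const, Finset.card_range]
    simp [Finset.mem_range.mpr hj]
    ring
  rw [h2]
  simp [Finset.mem_range.mpr hj]
  ring

/-- For a uniformly random `π ∈ S_{2n+1}`, `E[w(π)²] = (2n² + n)/3`; equivalently,
`3 · ∑_π w(π)² = (2n² + n) · (2n+1)!`. -/
theorem writhe_second_moment (n : ℕ) :
    3 * ∑ π : Equiv.Perm (ZMod (2 * n + 1)), (writheP n π) ^ 2 =
      (2 * (n : ℤ) ^ 2 + n) * (Nat.factorial (2 * n + 1) : ℤ) := by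
  classical
  set P : Finset (ZMod (2*n+1) × ℕ) := Finset.univ ×ˢ Finset.range n with hP
  have hw : ∀ π : Perm (ZMod (2*n+1)), writheP n π =
      ∑ p ∈ P, s n π p.1 (p.1 + ((p.2 + 1 : ℕ) : ZMod (2*n+1))) := by
    intro π
    rw [hP, Finset.sum_product]
    rfl
  have step1 : 3 * ∑ π : Perm (ZMod (2*n+1)), (writheP n π) ^ 2 =
      ∑ p ∈ P, ∑ q ∈ P, 3 * ∑ π : Perm (ZMod (2*n+1)),
        s n π p.1 (p.1 + ((p.2 + 1 : ℕ) : ZMod (2*n+1))) *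
        s n π q.1 (q.1 + ((q.2 + 1 : ℕ) : ZMod (2*n+1))) := by
    simp only [hw, sq, Finset.sum_mul_sum]
    rw [Finset.sum_comm, Finset.mul_sum]
    refine Finset.sum_congr rfl fun p _ => ?_
    rw [Finset.sum_comm, Finset.mul_sum]
  rw [step1]
  have hmem : ∀ p : ZMod (2*n+1) × ℕ, p ∈ P → p.2 < n := by
    intro p hp
    rw [hP, Finset.mem_product, Finset.mem_range] at hp
    exact hp.2
  have step2 : ∀ p ∈ P, ∀ q ∈ P, (3 * ∑ π : Perm (ZMod (2*n+1)),
      s n π p.1 (p.1 + ((p.2 + 1 : ℕ) : ZMod (2*n+1))) *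
      s n π q.1 (q.1 + ((q.2 + 1 : ℕ) : ZMod (2*n+1)))) =
      (Fintype.card (Perm (ZMod (2*n+1))) : ℤ) *
      ((if p.1 = q.1 ∧ ((p.2+1:ℕ) : ZMod (2*n+1)) = ((q.2+1:ℕ) : ZMod (2*n+1)) then 3 else 0) +
       (if p.1 = q.1 ∧ ((p.2+1:ℕ) : ZMod (2*n+1)) ≠ ((q.2+1:ℕ) : ZMod (2*n+1)) then 1 else 0) +
       (if p.1 + ((p.2+1:ℕ) : ZMod (2*n+1)) = q.1 + ((q.2+1:ℕ) : ZMod (2*n+1)) ∧ p.1 ≠ q.1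
          then 1 else 0) -
       (if p.1 = q.1 + ((q.2+1:ℕ) : ZMod (2*n+1)) then 1 else 0) -
       (if q.1 = p.1 + ((p.2+1:ℕ) : ZMod (2*n+1)) then 1 else 0)) := by
    intro p hp q hq
    have h1 := hmem p hp
    have h2 := hmem q hq
    refine key_s15 (cast_ne_zero (by omega) (by omega)) (cast_ne_zero (by omega) (by omega)) ?_
    have : ((p.2+1:ℕ) : ZMod (2*n+1)) + ((q.2+1:ℕ) : ZMod (2*n+1))
        = ((p.2 + q.2 + 2 : ℕ) : ZMod (2*n+1)) := by push_cast; ring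
    rw [this]
    exact cast_ne_zero (by omega) (by omega)
  rw [Finset.sum_congr rfl fun p hp => Finset.sum_congr rfl fun q hq => step2 p hp q hq]
  have step3 : ∀ p ∈ P, (∑ q ∈ P,
      ((if p.1 = q.1 ∧ ((p.2+1:ℕ) : ZMod (2*n+1)) = ((q.2+1:ℕ) : ZMod (2*n+1)) then 3 else 0) +
       (if p.1 = q.1 ∧ ((p.2+1:ℕ) : ZMod (2*n+1)) ≠ ((q.2+1:ℕ) : ZMod (2*n+1)) then 1 else 0) +
       (if p.1 + ((p.2+1:ℕ) : ZMod (2*n+1)) = q.1 + ((q.2+1:ℕ) : ZMod (2*n+1)) ∧ p.1 ≠ q.1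
          then 1 else 0) -
       (if p.1 = q.1 + ((q.2+1:ℕ) : ZMod (2*n+1)) then 1 else 0) -
       (if q.1 = p.1 + ((p.2+1:ℕ) : ZMod (2*n+1)) then 1 else 0) : ℤ)) = 1 := by
    intro p hp
    rw [hP, Finset.sum_product]
    rw [Finset.sum_comm]
    exact inner_count p.1 p.2 (Finset.mem_range.mpr (hmem p hp))
  have hfinal : ∑ p ∈ P, ∑ q ∈ P, (Fintype.card (Perm (ZMod (2*n+1))) : ℤ) *
      ((if p.1 = q.1 ∧ ((p.2+1:ℕ) : ZMod (2*n+1)) = ((q.2+1:ℕ) : ZMod (2*n+1)) then 3 else 0) +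
       (if p.1 = q.1 ∧ ((p.2+1:ℕ) : ZMod (2*n+1)) ≠ ((q.2+1:ℕ) : ZMod (2*n+1)) then 1 else 0) +
       (if p.1 + ((p.2+1:ℕ) : ZMod (2*n+1)) = q.1 + ((q.2+1:ℕ) : ZMod (2*n+1)) ∧ p.1 ≠ q.1
          then 1 else 0) -
       (if p.1 = q.1 + ((q.2+1:ℕ) : ZMod (2*n+1)) then 1 else 0) -
       (if q.1 = p.1 + ((p.2+1:ℕ) : ZMod (2*n+1)) then 1 else 0)) =
      ∑ p ∈ P, (Fintype.card (Perm (ZMod (2*n+1))) : ℤ) := by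
    refine Finset.sum_congr rfl fun p hp => ?_
    rw [← Finset.mul_sum, step3 p hp, mul_one]
  rw [hfinal, Finset.sum_const]
  have hcardP : P.card = (2*n+1) * n := by
    rw [hP, Finset.card_product, Finset.card_univ, ZMod.card, Finset.card_range]
  rw [hcardP, Fintype.card_perm, ZMod.card]
  simp only [nsmul_eq_mul]
  push_cast
  ring
end

section
/- For m ≥ 1, the average sign of the directed cycle C_{m+1} (vertices 1,…,m+1, edges (i, i+1 mod m+1), all oriented cyclically) equals minus the average sign of the path: A(C_{m+1}) = −A(P_{m−1}). -/
/-- `m! · A(P_{m−1})`: the sum over `σ ∈ S_m` of `∏_{i=1}^{m−1} sign(σ(i+1) − σ(i))`. -/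
def pathSum (m : ℕ) : ℤ :=
  ∑ σ : Equiv.Perm (Fin m), ∏ i : Fin (m - 1),
    if σ ⟨i.val, Nat.lt_of_succ_lt (Nat.add_lt_of_lt_sub i.isLt)⟩ <
        σ ⟨i.val + 1, Nat.add_lt_of_lt_sub i.isLt⟩
      then (1 : ℤ) else -1

/-- `(m+1)! · A(C_{m+1})`: the sum over `σ ∈ S_{m+1}` of the product of
`sign(σ(i+1) − σ(i))` over the edges of the cyclically oriented cycle on `m+1`
vertices (addition in `Fin (m+1)` is cyclic). -/
def cycleSum (m : ℕ) : ℤ :=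
  ∑ σ : Equiv.Perm (Fin (m + 1)), ∏ i : Fin (m + 1),
    if σ i < σ (i + 1) then (1 : ℤ) else -1

namespace AvgSignAux

/-- Extend a permutation of `Fin (n+1)` to `Fin (n+2)` fixing the last element. -/
def ext {n : ℕ} (τ : Equiv.Perm (Fin (n + 1))) : Equiv.Perm (Fin (n + 2)) :=
  Equiv.permCongr finSuccEquivLast.symm (Equiv.optionCongr τ)

@[simp] lemma ext_castSucc {n : ℕ} (τ : Equiv.Perm (Fin (n + 1))) (i : Fin (n + 1)) :
    ext τ i.castSucc = (τ i).castSucc := by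
  simp [ext]

@[simp] lemma ext_last {n : ℕ} (τ : Equiv.Perm (Fin (n + 1))) :
    ext τ (Fin.last (n + 1)) = Fin.last (n + 1) := by
  simp [ext]

lemma neg_one_eq_last (n : ℕ) : (-1 : Fin (n + 1)) = Fin.last n := by
  ext; rw [Fin.coe_neg_one]; rfl

/-- The bijection `Fin (n+2) × Perm (Fin (n+1)) → Perm (Fin (n+2))`, sending `(k, τ)`
to the permutation placing the maximum at position `k` and `τ` rotated after it. -/
def E {n : ℕ} (p : Fin (n + 2) × Equiv.Perm (Fin (n + 1))) : Equiv.Perm (Fin (n + 2)) :=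
  (Equiv.subRight (p.1 + 1)).trans (ext p.2)

lemma E_apply {n : ℕ} (k : Fin (n + 2)) (τ : Equiv.Perm (Fin (n + 1))) (j : Fin (n + 2)) :
    E (k, τ) j = ext τ (j - (k + 1)) := rfl

lemma E_injective {n : ℕ} : Function.Injective (E (n := n)) := by
  rintro ⟨k, τ⟩ ⟨k', τ'⟩ h
  have hk : k = k' := by
    have h1 : E (k, τ) k = Fin.last (n + 1) := by
      rw [E_apply]
      have : k - (k + 1) = Fin.last (n + 1) := by
        have : k - (k + 1) = -1 := by abel
        rw [this, neg_one_eq_last]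
      rw [this, ext_last]
    have h2 : ext τ' (k - (k' + 1)) = Fin.last (n + 1) := by
      rw [← E_apply, ← h, h1]
    have h3 : k - (k' + 1) = Fin.last (n + 1) :=
      (ext τ').injective (h2.trans (ext_last τ').symm)
    have : k = Fin.last (n + 1) + (k' + 1) := by
      rw [← h3]; abel
    rw [this, ← neg_one_eq_last]; abel
  subst hk
  have hτ : τ = τ' := by
    ext i
    have h1 : E (k, τ) (k + 1 + i.castSucc) = (τ i).castSucc := by
      rw [E_apply]
      have : k + 1 + i.castSucc - (k + 1) = i.castSucc := by abel
      rw [this, ext_castSucc]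
    have h2 : E (k, τ') (k + 1 + i.castSucc) = (τ' i).castSucc := by
      rw [E_apply]
      have : k + 1 + i.castSucc - (k + 1) = i.castSucc := by abel
      rw [this, ext_castSucc]
    have := h1.symm.trans (by rw [h, h2])
    exact congrArg Fin.val (Fin.castSucc_injective _ this)
  rw [hτ]

lemma E_bijective {n : ℕ} : Function.Bijective (E (n := n)) := by
  rw [Fintype.bijective_iff_injective_and_card]
  refine ⟨E_injective, ?_⟩
  simp [Fintype.card_perm, Nat.factorial_succ]

/-- The cycle product of `E (k, τ)` is minus the path product of `τ`. -/
lemma cycle_prod {n : ℕ} (k : Fin (n + 2)) (τ : Equiv.Perm (Fin (n + 1))) :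
    (∏ i : Fin (n + 2), if E (k, τ) i < E (k, τ) (i + 1) then (1 : ℤ) else -1)
      = -∏ i : Fin n, (if τ i.castSucc < τ i.succ then (1 : ℤ) else -1) := by
  have hrot : (∏ i : Fin (n + 2), if E (k, τ) i < E (k, τ) (i + 1) then (1 : ℤ) else -1)
      = ∏ i : Fin (n + 2), if ext τ i < ext τ (i + 1) then (1 : ℤ) else -1 := by
    refine (Fintype.prod_equiv (Equiv.addRight (k + 1))
      (fun i => if ext τ i < ext τ (i + 1) then (1 : ℤ) else -1)
      (fun i => if E (k, τ) i < E (k, τ) (i + 1) then (1 : ℤ) else -1) ?_).symm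
    intro x
    have h1 : E (k, τ) (Equiv.addRight (k + 1) x) = ext τ x := by
      rw [E_apply]; congr 1
      simp [Equiv.addRight]
    have h2 : E (k, τ) (Equiv.addRight (k + 1) x + 1) = ext τ (x + 1) := by
      rw [E_apply]; congr 1
      simp only [Equiv.coe_addRight]
      abel
    rw [h1, h2]
  rw [hrot, Fin.prod_univ_castSucc]
  have hlast : (if ext τ (Fin.last (n + 1)) < ext τ (Fin.last (n + 1) + 1) then (1 : ℤ) else -1)
      = -1 := by
    rw [if_neg]
    rw [ext_last]
    exact not_lt.2 (Fin.le_last _)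
  rw [hlast, Fin.prod_univ_castSucc]
  have hsecond : (if ext τ (Fin.last n).castSucc < ext τ ((Fin.last n).castSucc + 1)
      then (1 : ℤ) else -1) = 1 := by
    rw [if_pos]
    have h1 : (Fin.last n).castSucc + 1 = Fin.last (n + 1) := by
      ext
      rw [Fin.val_add_one_of_lt (Fin.castSucc_lt_last _)]
      rfl
    rw [h1, ext_last, ext_castSucc]
    exact Fin.castSucc_lt_last _
  rw [hsecond]
  have hmain : ∀ i : Fin n,
      (if ext τ i.castSucc.castSucc < ext τ (i.castSucc.castSucc + 1) then (1 : ℤ) else -1)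
        = if τ i.castSucc < τ i.succ then (1 : ℤ) else -1 := by
    intro i
    have h1 : i.castSucc.castSucc + 1 = i.succ.castSucc := by
      rw [← Fin.succ_castSucc]
      ext
      rw [Fin.val_add_one_of_lt (Fin.castSucc_lt_last _)]
      rfl
    rw [h1, ext_castSucc, ext_castSucc]
    simp only [Fin.castSucc_lt_castSucc_iff]
  rw [Finset.prod_congr rfl (fun i _ => hmain i)]
  ring

end AvgSignAux

/-- `A(C_{m+1}) = −A(P_{m−1})` for `m ≥ 1` (cleared of denominators:
`m! · cycleSum = −(m+1)! · pathSum`). -/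
theorem average_sign_cycle_eq_neg_path (m : ℕ) (hm : 1 ≤ m) :
    (Nat.factorial m : ℤ) * cycleSum m =
      -((Nat.factorial (m + 1) : ℤ) * pathSum m) := by
  obtain ⟨n, rfl⟩ : ∃ n, m = n + 1 := ⟨m - 1, (Nat.succ_pred_eq_of_pos hm).symm⟩
  have hpath : pathSum (n + 1)
      = ∑ τ : Equiv.Perm (Fin (n + 1)), ∏ i : Fin n,
          if τ i.castSucc < τ i.succ then (1 : ℤ) else -1 := rfl
  have hcycle : cycleSum (n + 1) = -((n + 2 : ℕ) : ℤ) * pathSum (n + 1) := by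
    have := Fintype.sum_bijective AvgSignAux.E AvgSignAux.E_bijective
      (fun p : Fin (n + 2) × Equiv.Perm (Fin (n + 1)) =>
        -∏ i : Fin n, (if p.2 i.castSucc < p.2 i.succ then (1 : ℤ) else -1))
      (fun σ : Equiv.Perm (Fin (n + 2)) =>
        ∏ i : Fin (n + 2), if σ i < σ (i + 1) then (1 : ℤ) else -1)
      (fun p => (AvgSignAux.cycle_prod p.1 p.2).symm)
    rw [cycleSum, ← this, Fintype.sum_prod_type]
    have hconst : ∀ k : Fin (n + 2),
        (∑ τ : Equiv.Perm (Fin (n + 1)),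
          -∏ i : Fin n, (if τ i.castSucc < τ i.succ then (1 : ℤ) else -1))
          = -pathSum (n + 1) := by
      intro k
      rw [hpath, Finset.sum_neg_distrib]
    rw [Finset.sum_congr rfl (fun k _ => hconst k), Finset.sum_const, Finset.card_univ,
      Fintype.card_fin, nsmul_eq_mul]
    push_cast
    ring
  rw [hcycle, Nat.factorial_succ (n + 1)]
  push_cast
  ring
end
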